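/- arXiv:math/0602279 — 9 statements merged into one kernel-verified Lean document; each statement's English description precedes it below -/
import Mathlib

section
/- For every integer n ≥ 2, 4^{n−1} = (1/2)·C(2n, n) + ∑_{h=2}^{n} ((h−1)/h) · C(2(h−1), h−1) · C(2(n−h), n−h), as an identity of rational numbers. -/
open Finset

private lemma catalan_succ_range (n : ℕ) :
    catalan (n + 1) = ∑ i ∈ Finset.range (n + 1), catalan i * catalan (n - i) := by
  rw [catalan_succ, ← Finset.sum_range fun i => catalan i * catalan (n - i)]

private lemma cb_succ_aux (k : ℕ) :
    Nat.centralBinom (k + 1) + 2 * catalan k = 4 * Nat.centralBinom k := by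
  have h1 := Nat.succ_mul_centralBinom_succ k
  have h2 := succ_mul_catalan_eq_centralBinom k
  have hk : 0 < k + 1 := Nat.succ_pos k
  refine Nat.eq_of_mul_eq_mul_left hk ?_
  have e : (k + 1) * (Nat.centralBinom (k + 1) + 2 * catalan k)
      = (k + 1) * Nat.centralBinom (k + 1) + 2 * ((k + 1) * catalan k) := by ring
  rw [e, h1, h2]
  ring

private lemma two_mul_U (m : ℕ) :
    2 * ∑ j ∈ Finset.range (m + 1), catalan j * Nat.centralBinom (m - j)
      = Nat.centralBinom (m + 1) := by
  induction m with
  | zero => simp [Nat.centralBinom]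
  | succ m ih =>
    have hsum : ∑ j ∈ Finset.range (m + 2), catalan j * Nat.centralBinom (m + 1 - j)
        = (∑ j ∈ Finset.range (m + 1), catalan j * Nat.centralBinom ((m - j) + 1))
          + catalan (m + 1) * Nat.centralBinom 0 := by
      rw [Finset.sum_range_succ]
      congr 1
      · refine Finset.sum_congr rfl fun j hj => ?_
        have hj' : j ≤ m := Nat.lt_succ_iff.mp (Finset.mem_range.mp hj)
        congr 2
        omega
      · rw [Nat.sub_self]
    have hkey : ∑ j ∈ Finset.range (m + 1), catalan j * Nat.centralBinom ((m - j) + 1)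
          + 2 * ∑ j ∈ Finset.range (m + 1), catalan j * catalan (m - j)
        = 4 * ∑ j ∈ Finset.range (m + 1), catalan j * Nat.centralBinom (m - j) := by
      rw [Finset.mul_sum, Finset.mul_sum, ← Finset.sum_add_distrib]
      refine Finset.sum_congr rfl fun j hj => ?_
      have := cb_succ_aux (m - j)
      nlinarith [this]
    have hcat := catalan_succ_range m
    have hA := cb_succ_aux (m + 1)
    rw [hsum]
    simp only [Nat.centralBinom_zero, mul_one]
    omega

private lemma S_eq (m : ℕ) :
    ∑ j ∈ Finset.range (m + 1), Nat.centralBinom j * Nat.centralBinom (m - j) = 4 ^ m := by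
  induction m with
  | zero => simp [Nat.centralBinom]
  | succ m ih =>
    have hsum : ∑ j ∈ Finset.range (m + 2), Nat.centralBinom j * Nat.centralBinom (m + 1 - j)
        = (∑ j ∈ Finset.range (m + 1),
              Nat.centralBinom j * Nat.centralBinom ((m - j) + 1))
          + Nat.centralBinom (m + 1) * Nat.centralBinom 0 := by
      rw [Finset.sum_range_succ]
      congr 1
      · refine Finset.sum_congr rfl fun j hj => ?_
        have hj' : j ≤ m := Nat.lt_succ_iff.mp (Finset.mem_range.mp hj)
        congr 2
        omega
      · rw [Nat.sub_self]
    have hkey : ∑ j ∈ Finset.range (m + 1), Nat.centralBinom j * Nat.centralBinom ((m - j) + 1)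
          + 2 * ∑ j ∈ Finset.range (m + 1), Nat.centralBinom j * catalan (m - j)
        = 4 * ∑ j ∈ Finset.range (m + 1), Nat.centralBinom j * Nat.centralBinom (m - j) := by
      rw [Finset.mul_sum, Finset.mul_sum, ← Finset.sum_add_distrib]
      refine Finset.sum_congr rfl fun j hj => ?_
      have := cb_succ_aux (m - j)
      nlinarith [this]
    have hrefl : ∑ j ∈ Finset.range (m + 1), Nat.centralBinom j * catalan (m - j)
        = ∑ j ∈ Finset.range (m + 1), catalan j * Nat.centralBinom (m - j) := by
      rw [← Finset.sum_range_reflect (fun j => catalan j * Nat.centralBinom (m - j)) (m + 1)]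
      refine Finset.sum_congr rfl fun j hj => ?_
      have hj' : j ≤ m := Nat.lt_succ_iff.mp (Finset.mem_range.mp hj)
      have h1 : m + 1 - 1 - j = m - j := by omega
      have h2 : m - (m - j) = j := by omega
      rw [h1, h2, mul_comm]
    have hU := two_mul_U m
    rw [hsum]
    simp only [Nat.centralBinom_zero, mul_one]
    have h4 : 4 ^ (m + 1) = 4 * 4 ^ m := by ring
    omega

theorem four_pow_pred_eq_half_central_binom_add_sum (n : ℕ) (hn : 2 ≤ n) :
    (4 : ℚ) ^ (n - 1) =
      (1 / 2) * (Nat.choose (2 * n) n : ℚ) +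
        ∑ h ∈ Finset.Icc 2 n,
          (((h : ℚ) - 1) / (h : ℚ)) * (Nat.choose (2 * (h - 1)) (h - 1) : ℚ) *
            (Nat.choose (2 * (n - h)) (n - h) : ℚ) := by
  obtain ⟨m, rfl⟩ : ∃ m, n = m + 2 := ⟨n - 2, by omega⟩
  clear hn
  -- rewrite the sum over Icc as a sum over range
  have hIcc : Finset.Icc 2 (m + 2) = Finset.Ico 2 (m + 3) := by
    exact (Finset.Ico_add_one_right_eq_Icc ..).symm
  rw [hIcc, Finset.sum_Ico_eq_sum_range]
  have hlen : m + 3 - 2 = m + 1 := by omega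
  rw [hlen]
  -- each term: h = 2 + i
  have hterm : ∀ i ∈ Finset.range (m + 1),
      (((2 + i : ℕ) : ℚ) - 1) / ((2 + i : ℕ) : ℚ)
          * (Nat.choose (2 * ((2 + i) - 1)) ((2 + i) - 1) : ℚ)
          * (Nat.choose (2 * ((m + 2) - (2 + i))) ((m + 2) - (2 + i)) : ℚ)
        = ((Nat.centralBinom (i + 1) : ℚ) - (catalan (i + 1) : ℚ))
            * (Nat.centralBinom (m - i) : ℚ) := by
    intro i hi
    have h1 : (2 + i) - 1 = i + 1 := by omega
    have h2 : (m + 2) - (2 + i) = m - i := by omega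
    rw [h1, h2]
    have hcb1 : Nat.choose (2 * (i + 1)) (i + 1) = Nat.centralBinom (i + 1) := rfl
    have hcb2 : Nat.choose (2 * (m - i)) (m - i) = Nat.centralBinom (m - i) := rfl
    rw [hcb1, hcb2]
    have hcat : ((i : ℚ) + 2) * (catalan (i + 1) : ℚ) = (Nat.centralBinom (i + 1) : ℚ) := by
      have := succ_mul_catalan_eq_centralBinom (i + 1)
      have := congrArg (Nat.cast : ℕ → ℚ) this
      push_cast at this
      linarith [this]
    have hne : ((2 + i : ℕ) : ℚ) ≠ 0 := by
      push_cast
      positivity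
    field_simp
    push_cast
    linear_combination ((Nat.centralBinom (m - i) : ℕ) : ℚ) * hcat
  rw [Finset.sum_congr rfl hterm]
  -- relate to the range (m+2) sums
  have hshift : ∑ j ∈ Finset.range (m + 2),
        ((Nat.centralBinom j : ℚ) - (catalan j : ℚ)) * (Nat.centralBinom (m + 1 - j) : ℚ)
      = (∑ i ∈ Finset.range (m + 1),
          ((Nat.centralBinom (i + 1) : ℚ) - (catalan (i + 1) : ℚ))
            * (Nat.centralBinom (m - i) : ℚ))
        + ((Nat.centralBinom 0 : ℚ) - (catalan 0 : ℚ)) * (Nat.centralBinom (m + 1) : ℚ) := by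
    rw [Finset.sum_range_succ' (fun j =>
      ((Nat.centralBinom j : ℚ) - (catalan j : ℚ)) * (Nat.centralBinom (m + 1 - j) : ℚ)) (m + 1)]
    congr 1
    refine Finset.sum_congr rfl fun i hi => ?_
    congr 3
    omega
  have hzero : ((Nat.centralBinom 0 : ℚ) - (catalan 0 : ℚ)) * (Nat.centralBinom (m + 1) : ℚ)
      = 0 := by
    simp [Nat.centralBinom_zero]
  have hsplit : ∑ j ∈ Finset.range (m + 2),
        ((Nat.centralBinom j : ℚ) - (catalan j : ℚ)) * (Nat.centralBinom (m + 1 - j) : ℚ)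
      = (4 : ℚ) ^ (m + 1) - (Nat.centralBinom (m + 2) : ℚ) / 2 := by
    have hS := S_eq (m + 1)
    have hU := two_mul_U (m + 1)
    have hSq : ∑ j ∈ Finset.range (m + 2),
        (Nat.centralBinom j : ℚ) * (Nat.centralBinom (m + 1 - j) : ℚ) = (4 : ℚ) ^ (m + 1) := by
      have := congrArg (Nat.cast : ℕ → ℚ) hS
      push_cast at this
      convert this using 2
    have hUq : ∑ j ∈ Finset.range (m + 2),
        (catalan j : ℚ) * (Nat.centralBinom (m + 1 - j) : ℚ)
          = (Nat.centralBinom (m + 2) : ℚ) / 2 := by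
      have := congrArg (Nat.cast : ℕ → ℚ) hU
      push_cast at this
      linarith [this]
    calc ∑ j ∈ Finset.range (m + 2),
          ((Nat.centralBinom j : ℚ) - (catalan j : ℚ)) * (Nat.centralBinom (m + 1 - j) : ℚ)
        = ∑ j ∈ Finset.range (m + 2),
            ((Nat.centralBinom j : ℚ) * (Nat.centralBinom (m + 1 - j) : ℚ)
              - (catalan j : ℚ) * (Nat.centralBinom (m + 1 - j) : ℚ)) := by
          refine Finset.sum_congr rfl fun j _ => by ring
      _ = (4 : ℚ) ^ (m + 1) - (Nat.centralBinom (m + 2) : ℚ) / 2 := by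
          rw [Finset.sum_sub_distrib, hSq, hUq]
  have hmain : (∑ i ∈ Finset.range (m + 1),
      ((Nat.centralBinom (i + 1) : ℚ) - (catalan (i + 1) : ℚ))
        * (Nat.centralBinom (m - i) : ℚ))
      = (4 : ℚ) ^ (m + 1) - (Nat.centralBinom (m + 2) : ℚ) / 2 := by
    rw [← hsplit, hshift, hzero, add_zero]
  rw [hmain]
  have hcb : (Nat.choose (2 * (m + 2)) (m + 2) : ℚ) = (Nat.centralBinom (m + 2) : ℚ) := rfl
  rw [hcb]
  have : m + 2 - 1 = m + 1 := by omega
  rw [this]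
  ring
end

section
/- For every integer n ≥ 2, 4^{n−2} = ((n−1)/n) · C(2(n−1), n−1) + ∑_{h=2}^{n−2} ((h−1)(n−h−1)/(h(n−h))) · C(2(h−1), h−1) · C(2(n−1−h), n−1−h), as an identity of rational numbers. -/
open Finset

namespace FourPowAux

noncomputable def cb (k : ℕ) : ℚ := Nat.centralBinom k
noncomputable def ct (k : ℕ) : ℚ := catalan k

lemma cb_zero : cb 0 = 1 := by simp [cb]
lemma ct_zero : ct 0 = 1 := by simp [ct]

lemma catQ (k : ℕ) : ((k : ℚ) + 1) * ct k = cb k := by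
  have h := congrArg (Nat.cast : ℕ → ℚ) (succ_mul_catalan_eq_centralBinom k)
  push_cast at h
  simpa [cb, ct] using h

lemma cbF (k : ℕ) : cb (k + 1) = 4 * cb k - 2 * ct k := by
  have h1 := congrArg (Nat.cast : ℕ → ℚ) (Nat.succ_mul_centralBinom_succ k)
  push_cast at h1
  have h2 := catQ k
  have hk : ((k : ℚ) + 1) ≠ 0 := by positivity
  apply mul_left_cancel₀ hk
  simp only [cb, ct] at *
  linear_combination h1 + 2 * h2

lemma ctconv (m : ℕ) : ct (m + 1) = ∑ k ∈ range (m + 1), ct k * ct (m - k) := by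
  have h' : catalan (m + 1) = ∑ k ∈ range (m + 1), catalan k * catalan (m - k) := by
    rw [catalan_succ, Finset.sum_range]
  have := congrArg (Nat.cast : ℕ → ℚ) h'
  push_cast at this
  simpa [ct] using this

lemma reflect (f g : ℕ → ℚ) (m : ℕ) :
    ∑ i ∈ range (m + 1), f i * g (m - i) = ∑ i ∈ range (m + 1), g i * f (m - i) := by
  rw [← Finset.sum_range_reflect (fun i => f i * g (m - i)) (m + 1)]
  apply Finset.sum_congr rfl
  intro i hi
  rw [Finset.mem_range] at hi
  have h1 : m + 1 - 1 - i = m - i := by omega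
  have h2 : m - (m - i) = i := by omega
  rw [h1, h2, mul_comm]

lemma Sconv (m : ℕ) : 2 * ∑ i ∈ range (m + 1), cb i * ct (m - i) = cb (m + 1) := by
  induction m with
  | zero => simp [cb, ct, Nat.centralBinom]
  | succ m ih =>
    rw [reflect cb ct (m + 1), Finset.sum_range_succ]
    have key : ∀ i ∈ range (m + 1),
        ct i * cb (m + 1 - i) = (4 * (ct i * cb (m - i)) - 2 * (ct i * ct (m - i))) := by
      intro i hi
      rw [Finset.mem_range] at hi
      have h1 : m + 1 - i = (m - i) + 1 := by omega
      rw [h1, cbF]; ring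
    rw [Finset.sum_congr rfl key, Finset.sum_sub_distrib, ← Finset.mul_sum, ← Finset.mul_sum,
      reflect ct cb m]
    have h3 := ctconv m
    have h4 := cbF (m + 1)
    have h5 : m + 1 - (m + 1) = 0 := by omega
    rw [h5, cb_zero]
    linear_combination 4 * ih + 4 * h3 - h4

lemma Aconv (m : ℕ) : ∑ i ∈ range (m + 1), cb i * cb (m - i) = 4 ^ m := by
  induction m with
  | zero => simp [cb, Nat.centralBinom]
  | succ m ih =>
    rw [Finset.sum_range_succ]
    have key : ∀ i ∈ range (m + 1),
        cb i * cb (m + 1 - i) = (4 * (cb i * cb (m - i)) - 2 * (cb i * ct (m - i))) := by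
      intro i hi
      rw [Finset.mem_range] at hi
      have h1 : m + 1 - i = (m - i) + 1 := by omega
      rw [h1, cbF]; ring
    rw [Finset.sum_congr rfl key, Finset.sum_sub_distrib, ← Finset.mul_sum, ← Finset.mul_sum]
    have h2 := Sconv m
    have h5 : m + 1 - (m + 1) = 0 := by omega
    rw [h5, cb_zero, ih]
    linear_combination -h2

end FourPowAux

open FourPowAux Finset in
theorem four_pow_sub_two_eq_sum (n : ℕ) (hn : 2 ≤ n) :
    (4 : ℚ) ^ (n - 2) =
      (((n : ℚ) - 1) / (n : ℚ)) * (Nat.choose (2 * (n - 1)) (n - 1) : ℚ) +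
        ∑ h ∈ Finset.Icc 2 (n - 2),
          ((((h : ℚ) - 1) * ((n : ℚ) - (h : ℚ) - 1)) / ((h : ℚ) * ((n : ℚ) - (h : ℚ)))) *
            (Nat.choose (2 * (h - 1)) (h - 1) : ℚ) *
            (Nat.choose (2 * (n - 1 - h)) (n - 1 - h) : ℚ) := by
  obtain ⟨m, rfl⟩ : ∃ m, n = m + 2 := ⟨n - 2, by omega⟩
  clear hn
  have hsub2 : m + 2 - 2 = m := by omega
  have hsub1 : m + 2 - 1 = m + 1 := by omega
  rw [hsub2, hsub1]
  push_cast
  have hterm : ∀ h ∈ Icc 2 m,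
      ((h : ℚ) - 1) * ((m : ℚ) + 2 - (h : ℚ) - 1) / ((h : ℚ) * ((m : ℚ) + 2 - (h : ℚ))) *
            (Nat.choose (2 * (h - 1)) (h - 1) : ℚ) *
            (Nat.choose (2 * (m + 1 - h)) (m + 1 - h) : ℚ)
        = (cb (h - 1) - ct (h - 1)) * (cb (m + 1 - h) - ct (m + 1 - h)) := by
    intro h hh
    rw [Finset.mem_Icc] at hh
    set i := h - 1 with hi
    set j := m + 1 - h with hj
    have hcasti : (h : ℚ) = (i : ℚ) + 1 := by
      have : h = i + 1 := by omega
      rw [this]; push_cast; ring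
    have hcastj : (m : ℚ) + 2 - (h : ℚ) = (j : ℚ) + 1 := by
      have h9 : m + 2 = h + (j + 1) := by omega
      have h10 := congrArg (Nat.cast : ℕ → ℚ) h9
      push_cast at h10
      linarith
    have hwi : cb i - ct i = (i : ℚ) / ((i : ℚ) + 1) * cb i := by
      have h2 := catQ i
      have hne : ((i : ℚ) + 1) ≠ 0 := by positivity
      field_simp
      linear_combination -h2
    have hwj : cb j - ct j = (j : ℚ) / ((j : ℚ) + 1) * cb j := by
      have h2 := catQ j
      have hne : ((j : ℚ) + 1) ≠ 0 := by positivity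
      field_simp
      linear_combination -h2
    have hcb1 : (Nat.choose (2 * i) i : ℚ) = cb i := by
      rw [cb, Nat.centralBinom_eq_two_mul_choose]
    have hcb2 : (Nat.choose (2 * j) j : ℚ) = cb j := by
      rw [cb, Nat.centralBinom_eq_two_mul_choose]
    rw [hcb1, hcb2, hwi, hwj, hcastj, hcasti]
    have hne1 : ((i : ℚ) + 1) ≠ 0 := by positivity
    have hne2 : ((j : ℚ) + 1) ≠ 0 := by positivity
    field_simp
    ring
  rw [Finset.sum_congr rfl hterm]
  have hre : ∑ h ∈ Icc 2 m, (cb (h - 1) - ct (h - 1)) * (cb (m + 1 - h) - ct (m + 1 - h))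
      = ∑ i ∈ range (m + 1), (cb i - ct i) * (cb (m - i) - ct (m - i)) := by
    rw [show (Icc 2 m) = (Icc 1 (m - 1)).image (fun i => i + 1) by
      ext x; simp [Finset.mem_image]; omega]
    rw [Finset.sum_image (by intro a _ b _ hab; simp only at hab; omega)]
    have heq : ∀ i ∈ Icc 1 (m - 1),
        (cb (i + 1 - 1) - ct (i + 1 - 1)) * (cb (m + 1 - (i + 1)) - ct (m + 1 - (i + 1)))
        = (cb i - ct i) * (cb (m - i) - ct (m - i)) := by
      intro i hi
      have h1 : i + 1 - 1 = i := by omega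
      have h2 : m + 1 - (i + 1) = m - i := by omega
      rw [h1, h2]
    rw [Finset.sum_congr rfl heq]
    apply Finset.sum_subset
    · intro x hx; rw [Finset.mem_Icc] at hx; rw [Finset.mem_range]; omega
    · intro x hx hnx
      rw [Finset.mem_range] at hx
      rw [Finset.mem_Icc] at hnx
      have hx0 : x = 0 ∨ x = m := by omega
      rcases hx0 with h | h
      · subst h; rw [cb_zero, ct_zero]; ring
      · rw [h, Nat.sub_self, cb_zero, ct_zero]; ring
  rw [hre]
  have hexp : ∑ i ∈ range (m + 1), (cb i - ct i) * (cb (m - i) - ct (m - i))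
      = (∑ i ∈ range (m + 1), cb i * cb (m - i))
        - (∑ i ∈ range (m + 1), cb i * ct (m - i))
        - (∑ i ∈ range (m + 1), ct i * cb (m - i))
        + (∑ i ∈ range (m + 1), ct i * ct (m - i)) := by
    have hdist : ∀ i ∈ range (m + 1), (cb i - ct i) * (cb (m - i) - ct (m - i))
        = (cb i * cb (m - i) - cb i * ct (m - i) - ct i * cb (m - i)) + ct i * ct (m - i) := by
      intro i _; ring
    rw [Finset.sum_congr rfl hdist, Finset.sum_add_distrib, Finset.sum_sub_distrib,
      Finset.sum_sub_distrib]
  rw [hexp, reflect ct cb m, Aconv m, ← ctconv m]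
  have hS := Sconv m
  have hcat := catQ (m + 1)
  have hcb : (Nat.choose (2 * (m + 1)) (m + 1) : ℚ) = cb (m + 1) := by
    rw [cb, Nat.centralBinom_eq_two_mul_choose]
  have hne : ((m : ℚ) + 2) ≠ 0 := by positivity
  have hq : ((m : ℚ) + 2 - 1) / ((m : ℚ) + 2) * cb (m + 1) = cb (m + 1) - ct (m + 1) := by
    rw [div_mul_eq_mul_div, div_eq_iff hne]
    push_cast at hcat
    linear_combination hcat
  rw [hcb, hq]
  linear_combination hS
end

section
/- Let E be a real vector space of dimension ℓ, let α_1, …, α_ℓ be a basis of E, and let α_0 = ∑_{j=1}^{ℓ} n_j α_j where every coefficient n_j is a negative real number. For each i = 0, 1, …, ℓ, let C^{(i)} denote the set of all linear combinations with nonnegative coefficients of the ℓ vectors {α_0, …, α_ℓ} \ {α_i}. Then E = ⋃_{i=0}^{ℓ} C^{(i)}, i.e., every vector u ∈ E lies in at least one of the cones C^{(i)}. -/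
/-- If `α 1, …, α ℓ` is a basis of `E` and `α 0 = ∑ j n j • α j.succ` with all `n j < 0`,
then every vector of `E` is a nonnegative linear combination of one of the `ℓ`-element
subsets `{α 0, …, α ℓ} \ {α i}`. -/
theorem mem_union_of_cones {ℓ : ℕ} {E : Type*} [AddCommGroup E] [Module ℝ E]
    (α : Fin (ℓ + 1) → E)
    (hli : LinearIndependent ℝ (fun j : Fin ℓ => α j.succ))
    (hspan : Submodule.span ℝ (Set.range fun j : Fin ℓ => α j.succ) = ⊤)
    (n : Fin ℓ → ℝ) (hn : ∀ j, n j < 0)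
    (h0 : α 0 = ∑ j : Fin ℓ, n j • α j.succ) :
    ∀ u : E, ∃ i : Fin (ℓ + 1), ∃ c : Fin (ℓ + 1) → ℝ,
      (∀ k, 0 ≤ c k) ∧ c i = 0 ∧ u = ∑ k : Fin (ℓ + 1), c k • α k := by
  intro u
  have hb : ⊤ ≤ Submodule.span ℝ (Set.range fun j : Fin ℓ => α j.succ) := hspan.ge
  let b : Module.Basis (Fin ℓ) ℝ E := Module.Basis.mk hli hb
  have hbα : ∀ j, b j = α j.succ := fun j => Module.Basis.mk_apply hli hb j
  set d : Fin ℓ → ℝ := fun j => b.repr u j with hd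
  have hu : u = ∑ j : Fin ℓ, d j • α j.succ := by
    conv_lhs => rw [← b.sum_repr u]
    exact Finset.sum_congr rfl fun j _ => by rw [hbα]
  by_cases hall : ∀ j, 0 ≤ d j
  · refine ⟨0, Fin.cases 0 d, fun k => ?_, Fin.cases_zero .., ?_⟩
    · exact Fin.cases le_rfl hall k
    · rw [Fin.sum_univ_succ]
      simp [hu]
  · push_neg at hall
    obtain ⟨j₁, hj₁⟩ := hall
    have hne : (Finset.univ : Finset (Fin ℓ)).Nonempty := ⟨j₁, Finset.mem_univ _⟩
    obtain ⟨j₀, -, hj₀⟩ := Finset.exists_max_image Finset.univ (fun j => d j / n j) hne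
    set t := d j₀ / n j₀ with ht
    have htpos : 0 ≤ t :=
      le_trans (le_of_lt (div_pos_of_neg_of_neg hj₁ (hn j₁))) (hj₀ j₁ (Finset.mem_univ _))
    refine ⟨j₀.succ, Fin.cases t (fun j => d j - t * n j), ?_, ?_, ?_⟩
    · intro k
      refine Fin.cases htpos (fun j => ?_) k
      have h := (div_le_iff_of_neg (hn j)).mp (hj₀ j (Finset.mem_univ _))
      simp only [Fin.cases_succ]
      linarith
    · show d j₀ - t * n j₀ = 0
      rw [ht, div_mul_cancel₀ _ (ne_of_lt (hn j₀))]
      ring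
    · rw [Fin.sum_univ_succ]
      simp only [Fin.cases_zero, Fin.cases_succ]
      rw [h0, Finset.smul_sum, hu, ← Finset.sum_add_distrib]
      refine Finset.sum_congr rfl fun j _ => ?_
      rw [smul_smul, ← add_smul]
      ring_nf
end

section
/- Let E be a real vector space of dimension ℓ, let α_1, …, α_ℓ be a basis of E, and let α_0 = ∑_{j=1}^{ℓ} n_j α_j where every coefficient n_j is a negative real number. For each i = 0, 1, …, ℓ, let C°^{(i)} denote the set of all linear combinations with strictly positive coefficients of the ℓ vectors {α_0, …, α_ℓ} \ {α_i}. Then for all i ≠ j, the sets C°^{(i)} and C°^{(j)} are disjoint. -/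
/-- If `α 1, …, α ℓ` is a basis of `E` and `α 0 = ∑ j n j • α j.succ` with all `n j < 0`,
then the open cones of strictly positive combinations of the `ℓ`-element subsets
`{α 0, …, α ℓ} \ {α i}` are pairwise disjoint. -/
theorem open_cones_disjoint {ℓ : ℕ} {E : Type*} [AddCommGroup E] [Module ℝ E]
    (α : Fin (ℓ + 1) → E)
    (hli : LinearIndependent ℝ (fun j : Fin ℓ => α j.succ))
    (hspan : Submodule.span ℝ (Set.range fun j : Fin ℓ => α j.succ) = ⊤)
    (n : Fin ℓ → ℝ) (hn : ∀ j, n j < 0)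
    (h0 : α 0 = ∑ j : Fin ℓ, n j • α j.succ) :
    ∀ i j : Fin (ℓ + 1), i ≠ j →
      Disjoint
        {u : E | ∃ c : Fin (ℓ + 1) → ℝ, (∀ k, k ≠ i → 0 < c k) ∧ c i = 0 ∧
          u = ∑ k : Fin (ℓ + 1), c k • α k}
        {u : E | ∃ c : Fin (ℓ + 1) → ℝ, (∀ k, k ≠ j → 0 < c k) ∧ c j = 0 ∧
          u = ∑ k : Fin (ℓ + 1), c k • α k} := by
  intro i j hij
  rw [Set.disjoint_left]
  rintro u ⟨c, hc, hci, rfl⟩ ⟨d, hd, hdj, hu⟩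
  have expand : ∀ e : Fin (ℓ + 1) → ℝ, ∑ k : Fin (ℓ + 1), e k • α k
      = ∑ k : Fin ℓ, (e 0 * n k + e k.succ) • α k.succ := by
    intro e
    rw [Fin.sum_univ_succ, h0, Finset.smul_sum, ← Finset.sum_add_distrib]
    refine Finset.sum_congr rfl fun k _ => ?_
    rw [add_smul, smul_smul]
  have key : ∀ k : Fin ℓ, c 0 * n k + c k.succ = d 0 * n k + d k.succ := by
    have hsum : ∑ k : Fin ℓ,
        ((c 0 * n k + c k.succ) - (d 0 * n k + d k.succ)) • α k.succ = 0 := by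
      simp only [sub_smul]
      rw [Finset.sum_sub_distrib, ← expand c, ← expand d, ← hu, sub_self]
    have h := Fintype.linearIndependent_iff.mp hli _ hsum
    intro k
    have := h k
    linarith
  by_cases hi0 : i = 0
  · have hj0 : j ≠ 0 := fun h => hij (hi0.trans h.symm)
    set k := j.pred hj0 with hk
    have hks : k.succ = j := Fin.succ_pred j hj0
    have hkey := key k
    rw [hks] at hkey
    have hc0 : c 0 = 0 := hi0 ▸ hci
    have hdj0 : d j = 0 := hdj
    have hcj : 0 < c j := hc j (fun h => hij h.symm)
    have hd0 : 0 < d 0 := hd 0 (fun h => hj0 h.symm)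
    have := hn k
    nlinarith
  · by_cases hj0 : j = 0
    · set k := i.pred hi0 with hk
      have hks : k.succ = i := Fin.succ_pred i hi0
      have hkey := key k
      rw [hks] at hkey
      have hd0 : d 0 = 0 := hj0 ▸ hdj
      have hdi : 0 < d i := hd i (fun h => hij h)
      have hc0 : 0 < c 0 := hc 0 (fun h => hi0 h.symm)
      have := hn k
      nlinarith
    · set ki := i.pred hi0 with hki
      set kj := j.pred hj0 with hkj
      have hkis : ki.succ = i := Fin.succ_pred i hi0
      have hkjs : kj.succ = j := Fin.succ_pred j hj0
      have h1 := key ki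
      have h2 := key kj
      rw [hkis] at h1
      rw [hkjs] at h2
      have hdi : 0 < d i := hd i (fun h => hij h)
      have hcj : 0 < c j := hc j (fun h => hij h.symm)
      have hni := hn ki
      have hnj := hn kj
      -- from h1 : c0 * n ki = d0 * n ki + d i (since c i = 0), so (c0 - d0) * n ki > 0 ⇒ c0 < d0
      have hlt1 : c 0 < d 0 := by nlinarith [hci]
      have hlt2 : d 0 < c 0 := by nlinarith [hdj]
      linarith
end

section
/- Let α_1, …, α_ℓ be a basis of ℝ^ℓ and let α_0 = ∑_{j=1}^{ℓ} n_j α_j where every coefficient n_j is a negative real number. For each i = 0, 1, …, ℓ, let C^{(i)} denote the cone of nonnegative linear combinations of the ℓ vectors {α_0, …, α_ℓ} \ {α_i}, let B be the closed unit ball of ℝ^ℓ, and let λ denote Lebesgue measure. Then ∑_{i=0}^{ℓ} λ(C^{(i)} ∩ B) / λ(B) = 1. -/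
open MeasureTheory

lemma sum_measure_div_eq_one {E : Type*} [MeasurableSpace E] (μ : Measure E) {m : ℕ}
    (A : Fin m → Set E) (B : Set E)
    (hcov : ∀ u, ∃ i, u ∈ A i)
    (hnull : ∀ i j, i ≠ j → μ (A i ∩ A j) = 0)
    (hmeas : ∀ i, MeasurableSet (A i)) (hB : MeasurableSet B)
    (hB0 : μ B ≠ 0) (hBtop : μ B ≠ ⊤) :
    ∑ i, μ (A i ∩ B) / μ B = 1 := by
  have hU : (⋃ i, A i ∩ B) = B := by
    rw [← Set.iUnion_inter, Set.iUnion_eq_univ_iff.mpr hcov, Set.univ_inter]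
  have hsum : ∑ i, μ (A i ∩ B) = μ B := by
    rw [← tsum_fintype (L := .unconditional _), ← measure_iUnion₀, hU]
    · intro i j hij
      refine measure_mono_null ?_ (hnull i j hij)
      intro x hx
      exact ⟨hx.1.1, hx.2.1⟩
    · exact fun i => ((hmeas i).inter hB).nullMeasurableSet
  simp only [div_eq_mul_inv, ← Finset.sum_mul, hsum]
  exact ENNReal.mul_inv_cancel hB0 hBtop

/-- If `α 1, …, α ℓ` is a basis of `ℝ^ℓ` and `α 0 = ∑ j n j • α j.succ` with all `n j < 0`,
then the normalized solid angles of the cones generated by the `ℓ`-element subsets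
`{α 0, …, α ℓ} \ {α i}` sum to `1`. -/
theorem sum_solid_angles_eq_one {ℓ : ℕ}
    (α : Fin (ℓ + 1) → EuclideanSpace ℝ (Fin ℓ))
    (hli : LinearIndependent ℝ (fun j : Fin ℓ => α j.succ))
    (hspan : Submodule.span ℝ (Set.range fun j : Fin ℓ => α j.succ) = ⊤)
    (n : Fin ℓ → ℝ) (hn : ∀ j, n j < 0)
    (h0 : α 0 = ∑ j : Fin ℓ, n j • α j.succ) :
    ∑ i : Fin (ℓ + 1),
        volume ({u : EuclideanSpace ℝ (Fin ℓ) |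
              ∃ c : Fin (ℓ + 1) → ℝ, (∀ k, 0 ≤ c k) ∧ c i = 0 ∧
                u = ∑ k : Fin (ℓ + 1), c k • α k} ∩
            Metric.closedBall 0 1) /
          volume (Metric.closedBall (0 : EuclideanSpace ℝ (Fin ℓ)) 1) = 1 := by
  classical
  set A : Fin (ℓ + 1) → Set (EuclideanSpace ℝ (Fin ℓ)) := fun i => {u : EuclideanSpace ℝ (Fin ℓ) |
      ∃ c : Fin (ℓ + 1) → ℝ, (∀ k, 0 ≤ c k) ∧ c i = 0 ∧
        u = ∑ k : Fin (ℓ + 1), c k • α k} with hA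
  let b : Module.Basis (Fin ℓ) ℝ (EuclideanSpace ℝ (Fin ℓ)) := Module.Basis.mk hli hspan.ge
  have hb : ∀ j, b j = α j.succ := fun j => Module.Basis.mk_apply hli hspan.ge j
  -- coordinate function
  set x : EuclideanSpace ℝ (Fin ℓ) → Fin ℓ → ℝ := fun u j => b.repr u j with hx
  have hxsum : ∀ u : EuclideanSpace ℝ (Fin ℓ), u = ∑ j, x u j • α j.succ := by
    intro u
    conv_lhs => rw [← b.sum_repr u]
    exact Finset.sum_congr rfl fun j _ => by rw [hb]
  have hxof : ∀ (d : Fin ℓ → ℝ) (j : Fin ℓ), x (∑ k, d k • α k.succ) j = d j := by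
    intro d j
    have : (∑ k, d k • α k.succ) = ∑ k, d k • b k :=
      Finset.sum_congr rfl fun k _ => by rw [hb]
    rw [hx]; simp only [this, b.repr_sum_self]
  -- decomposition of a sum over Fin (ℓ+1)
  have hdec : ∀ (c : Fin (ℓ + 1) → ℝ),
      (∑ k : Fin (ℓ + 1), c k • α k) = ∑ j : Fin ℓ, (c 0 * n j + c j.succ) • α j.succ := by
    intro c
    rw [Fin.sum_univ_succ, h0, Finset.smul_sum, ← Finset.sum_add_distrib]
    exact Finset.sum_congr rfl fun j _ => by rw [smul_smul, add_smul]
  -- characterization of the cones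
  have hA0 : A 0 = {u : EuclideanSpace ℝ (Fin ℓ) | ∀ j, 0 ≤ x u j} := by
    ext u
    constructor
    · rintro ⟨c, hc, hc0, rfl⟩ j
      rw [hdec, hxof, hc0, zero_mul, zero_add]
      exact hc j.succ
    · intro hu
      refine ⟨Fin.cases 0 (fun j => x u j), ?_, by simp, ?_⟩
      · intro k
        refine Fin.cases ?_ ?_ k
        · exact le_refl 0
        · intro j; simp only [Fin.cases_succ]; exact hu j
      · rw [Fin.sum_univ_succ]
        simp only [Fin.cases_zero, Fin.cases_succ, zero_smul, zero_add]
        exact hxsum u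
  have hAs : ∀ j₀ : Fin ℓ, A j₀.succ =
      {u : EuclideanSpace ℝ (Fin ℓ) | x u j₀ ≤ 0 ∧ ∀ k, n j₀ * x u k ≤ n k * x u j₀} := by
    intro j₀
    ext u
    constructor
    · rintro ⟨c, hc, hc0, rfl⟩
      have hxval : ∀ k, x (∑ k : Fin (ℓ+1), c k • α k) k = c 0 * n k + c k.succ := by
        intro k; rw [hdec, hxof]
      constructor
      · rw [hxval, hc0, add_zero]
        exact mul_nonpos_of_nonneg_of_nonpos (hc 0) (hn j₀).le
      · intro k
        rw [hxval, hxval, hc0, add_zero]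
        nlinarith [hc 0, hc k.succ, (hn j₀).le, (hn k).le]
    · rintro ⟨h1, h2⟩
      set c0 : ℝ := x u j₀ / n j₀ with hc0
      have hc0nn : 0 ≤ c0 := div_nonneg_of_nonpos h1 (hn j₀).le
      refine ⟨Fin.cases c0 (fun k => x u k - c0 * n k), ?_, ?_, ?_⟩
      · intro k
        refine Fin.cases ?_ ?_ k
        · exact hc0nn
        · intro k'
          simp only [Fin.cases_succ]
          have hne : n j₀ ≠ 0 := (hn j₀).ne
          have : x u k' - c0 * n k' = (n j₀ * x u k' - n k' * x u j₀) / n j₀ := by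
            rw [hc0]; field_simp
          rw [this]
          exact div_nonneg_of_nonpos (by linarith [h2 k']) (hn j₀).le
      · simp only [Fin.cases_succ]
        have hne : n j₀ ≠ 0 := (hn j₀).ne
        rw [hc0]; field_simp; ring
      · rw [hdec]
        simp only [Fin.cases_zero, Fin.cases_succ]
        conv_lhs => rw [hxsum u]
        exact Finset.sum_congr rfl fun j _ => by ring_nf
  -- covering
  have hcov : ∀ u, ∃ i, u ∈ A i := by
    intro u
    by_cases h : ∀ j, 0 ≤ x u j
    · exact ⟨0, hA0 ▸ h⟩
    · push_neg at h
      obtain ⟨j1, hj1⟩ := h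
      obtain ⟨j₀, -, hj₀⟩ := Finset.exists_max_image Finset.univ (fun j => x u j / n j)
        ⟨j1, Finset.mem_univ j1⟩
      refine ⟨j₀.succ, (hAs j₀) ▸ ?_⟩
      have hpos : 0 < x u j₀ / n j₀ :=
        lt_of_lt_of_le (div_pos_of_neg_of_neg hj1 (hn j1)) (hj₀ j1 (Finset.mem_univ j1))
      constructor
      · have hx0 : x u j₀ = (x u j₀ / n j₀) * n j₀ := (div_mul_cancel₀ _ (hn j₀).ne).symm
        rw [hx0]
        exact (mul_neg_of_pos_of_neg hpos (hn j₀)).le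
      · intro k
        have hknz : n k ≠ 0 := (hn k).ne
        have hjnz : n j₀ ≠ 0 := (hn j₀).ne
        have hmm : 0 < n k * n j₀ := mul_pos_of_neg_of_neg (hn k) (hn j₀)
        have h3 := mul_le_mul_of_nonneg_right (hj₀ k (Finset.mem_univ k)) hmm.le
        have e1 : x u k / n k * (n k * n j₀) = n j₀ * x u k := by
          field_simp
        have e2 : x u j₀ / n j₀ * (n k * n j₀) = n k * x u j₀ := by
          field_simp
        linarith
  -- kernels of nonzero functionals are null
  have hker : ∀ (φ : EuclideanSpace ℝ (Fin ℓ) →ₗ[ℝ] ℝ), φ ≠ 0 →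
      volume {u | φ u = 0} = 0 := by
    intro φ hφ
    have hs : {u | φ u = 0} = (LinearMap.ker φ : Set (EuclideanSpace ℝ (Fin ℓ))) := by
      ext u; simp [LinearMap.mem_ker]
    rw [hs]
    exact Measure.addHaar_submodule volume _ (by simpa [LinearMap.ker_eq_top] using hφ)
  have hnull0 : ∀ j₀ : Fin ℓ, volume (A 0 ∩ A j₀.succ) = 0 := by
    intro j₀
    refine measure_mono_null ?_ (hker (b.coord j₀) ?_)
    · rintro u ⟨hu0, hus⟩
      rw [hA0] at hu0; rw [hAs j₀] at hus
      have : x u j₀ = 0 := le_antisymm hus.1 (hu0 j₀)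
      simpa [Module.Basis.coord_apply] using this
    · intro h
      have h2 : b.coord j₀ (b j₀) = 0 := by rw [h]; rfl
      rw [Module.Basis.coord_apply, Module.Basis.repr_self] at h2
      simp at h2
  have hnullss : ∀ j₀ k₀ : Fin ℓ, j₀ ≠ k₀ → volume (A j₀.succ ∩ A k₀.succ) = 0 := by
    intro j₀ k₀ hne
    refine measure_mono_null ?_ (hker (n j₀ • b.coord k₀ - n k₀ • b.coord j₀) ?_)
    · rintro u ⟨hu1, hu2⟩
      rw [hAs j₀] at hu1; rw [hAs k₀] at hu2
      have h1 := hu1.2 k₀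
      have h2 := hu2.2 j₀
      show (n j₀ • b.coord k₀ - n k₀ • b.coord j₀) u = 0
      simp only [LinearMap.sub_apply, LinearMap.smul_apply, smul_eq_mul, Module.Basis.coord_apply]
      have hxk : (b.repr u) k₀ = x u k₀ := rfl
      have hxj : (b.repr u) j₀ = x u j₀ := rfl
      rw [hxk, hxj]
      linarith
    · intro h
      have h2 : (n j₀ • b.coord k₀ - n k₀ • b.coord j₀) (b j₀) = 0 := by rw [h]; rfl
      simp only [LinearMap.sub_apply, LinearMap.smul_apply, smul_eq_mul,
        Module.Basis.coord_apply, Module.Basis.repr_self] at h2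
      simp [Finsupp.single_apply, if_neg hne] at h2
      exact (hn k₀).ne h2
  have hnull : ∀ i j, i ≠ j → volume (A i ∩ A j) = 0 := by
    intro i j hij
    induction i using Fin.cases with
    | zero =>
      induction j using Fin.cases with
      | zero => exact absurd rfl hij
      | succ j₀ => exact hnull0 j₀
    | succ i₀ =>
      induction j using Fin.cases with
      | zero => rw [Set.inter_comm]; exact hnull0 i₀
      | succ j₀ => exact hnullss i₀ j₀ (fun h => hij (by rw [h]))
  -- measurability
  have hmeasx : ∀ j, Measurable fun u => x u j := by
    intro j
    have heq : (fun u => x u j) = b.coord j := by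
      ext u; simp [Module.Basis.coord_apply, hx]
    rw [heq]
    exact (LinearMap.continuous_of_finiteDimensional (b.coord j)).measurable
  have hmeas : ∀ i, MeasurableSet (A i) := by
    intro i
    induction i using Fin.cases with
    | zero =>
      rw [hA0]
      have heq : {u : EuclideanSpace ℝ (Fin ℓ) | ∀ j, 0 ≤ x u j} = ⋂ j, {u | 0 ≤ x u j} := by
        ext u; simp [Set.mem_iInter]
      rw [heq]
      exact MeasurableSet.iInter fun j => measurableSet_le measurable_const (hmeasx j)
    | succ j₀ =>
      rw [hAs j₀]
      have heq : {u : EuclideanSpace ℝ (Fin ℓ) |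
            x u j₀ ≤ 0 ∧ ∀ k, n j₀ * x u k ≤ n k * x u j₀} =
          {u | x u j₀ ≤ 0} ∩ ⋂ k, {u | n j₀ * x u k ≤ n k * x u j₀} := by
        ext u; simp [Set.mem_iInter]
      rw [heq]
      exact (measurableSet_le (hmeasx j₀) measurable_const).inter
        (MeasurableSet.iInter fun k => measurableSet_le
          ((hmeasx k).const_mul _) ((hmeasx j₀).const_mul _))
  exact sum_measure_div_eq_one volume A (Metric.closedBall 0 1) hcov hnull hmeas
    measurableSet_closedBall (Metric.measure_closedBall_pos volume 0 one_pos).ne'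
    measure_closedBall_lt_top.ne
end

section
/- Let E_1 and E_2 be finite-dimensional real inner product spaces, let E = E_1 × E_2 with the product inner product, and let C_1 ⊆ E_1 and C_2 ⊆ E_2 be measurable convex cones. Let B, B_1, B_2 denote the closed unit balls of E, E_1, E_2 respectively and λ the corresponding Lebesgue (Haar) measures. Then λ((C_1 × C_2) ∩ B)/λ(B) = (λ_1(C_1 ∩ B_1)/λ_1(B_1)) · (λ_2(C_2 ∩ B_2)/λ_2(B_2)), i.e., the normalized solid angle of the product cone is the product of the normalized solid angles. -/
open MeasureTheory Set Metric Pointwise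

noncomputable def gaussK (n : ℕ) : ENNReal :=
  ∫⁻ t in Set.Ioo (0:ℝ) 1, ENNReal.ofReal (Real.sqrt (-Real.log t) ^ n)

section Space

variable {F : Type*} [NormedAddCommGroup F] [InnerProductSpace ℝ F] [FiniteDimensional ℝ F]
  [MeasurableSpace F] [BorelSpace F]

lemma cone_inter_closedBall (C : Set F)
    (hsmul : ∀ (c : ℝ), 0 ≤ c → ∀ x ∈ C, c • x ∈ C) {r : ℝ} (hr : 0 < r) :
    C ∩ Metric.closedBall 0 r = r • (C ∩ Metric.closedBall 0 1) := by
  ext x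
  constructor
  · rintro ⟨hxC, hxB⟩
    refine ⟨r⁻¹ • x, ⟨hsmul _ (by positivity) _ hxC, ?_⟩, ?_⟩
    · rw [mem_closedBall_zero_iff] at hxB ⊢
      rw [norm_smul, Real.norm_eq_abs, abs_inv, abs_of_pos hr]
      rw [inv_mul_le_iff₀ hr]
      simpa using hxB
    · simp [smul_inv_smul₀ hr.ne']
  · rintro ⟨y, ⟨hyC, hyB⟩, rfl⟩
    refine ⟨hsmul _ hr.le _ hyC, ?_⟩
    rw [mem_closedBall_zero_iff] at hyB ⊢
    rw [norm_smul, Real.norm_eq_abs, abs_of_pos hr]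
    calc r * ‖y‖ ≤ r * 1 := by nlinarith
    _ = r := mul_one r

lemma lintegral_gauss_cone (C : Set F) (hCm : MeasurableSet C)
    (hsmul : ∀ (c : ℝ), 0 ≤ c → ∀ x ∈ C, c • x ∈ C) :
    ∫⁻ x in C, ENNReal.ofReal (Real.exp (-‖x‖ ^ 2)) ∂volume
      = gaussK (Module.finrank ℝ F) * volume (C ∩ Metric.closedBall 0 1) := by
  rw [lintegral_eq_lintegral_meas_le (volume.restrict C) (f := fun x : F => Real.exp (-‖x‖ ^ 2))
      (Filter.Eventually.of_forall fun x => (Real.exp_pos _).le)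
      ((Real.continuous_exp.comp (continuous_norm.pow 2).neg).aemeasurable)]
  have key : ∀ᵐ t ∂(volume.restrict (Set.Ioi (0:ℝ))),
      volume.restrict C {x : F | t ≤ Real.exp (-‖x‖ ^ 2)}
        = (Set.Ioo (0:ℝ) 1).indicator
            (fun t => volume (C ∩ Metric.closedBall 0 1)
              * ENNReal.ofReal (Real.sqrt (-Real.log t) ^ Module.finrank ℝ F)) t := by
    have h1 : ({(1:ℝ)} : Set ℝ)ᶜ ∈ ae (volume.restrict (Set.Ioi (0:ℝ))) := by
      refine Filter.mem_of_superset ?_ (fun t ht => ht)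
      exact compl_mem_ae_iff.mpr (by simp [Measure.restrict_apply])
    filter_upwards [h1, ae_restrict_mem measurableSet_Ioi] with t ht1 htpos
    have ht1' : t ≠ 1 := by simpa using ht1
    rw [Set.mem_Ioi] at htpos
    rcases lt_or_gt_of_ne ht1' with hlt | hgt
    · -- t ∈ (0,1)
      have hlog : 0 < -Real.log t := by
        have := Real.log_neg htpos hlt
        linarith
      have hset : {x : F | t ≤ Real.exp (-‖x‖ ^ 2)}
          = Metric.closedBall 0 (Real.sqrt (-Real.log t)) := by
        ext x
        simp only [Set.mem_setOf_eq, Metric.mem_closedBall, dist_zero_right]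
        rw [Real.le_sqrt (norm_nonneg x) hlog.le, ← Real.log_le_iff_le_exp htpos]
        constructor <;> intro h <;> linarith
      rw [hset, Measure.restrict_apply (measurableSet_closedBall),
        Set.indicator_of_mem (Set.mem_Ioo.mpr ⟨htpos, hlt⟩)]
      have hrpos : 0 < Real.sqrt (-Real.log t) := Real.sqrt_pos.mpr hlog
      rw [Set.inter_comm, cone_inter_closedBall C hsmul hrpos,
        Measure.addHaar_smul_of_nonneg volume hrpos.le, mul_comm]
    · -- t > 1 : empty set
      have hset : {x : F | t ≤ Real.exp (-‖x‖ ^ 2)} = (∅ : Set F) := by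
        ext x
        simp only [Set.mem_setOf_eq, Set.mem_empty_iff_false, iff_false, not_le]
        calc Real.exp (-‖x‖ ^ 2) ≤ 1 := Real.exp_le_one_iff.mpr (by nlinarith [sq_nonneg ‖x‖])
          _ < t := hgt
      rw [hset, Set.indicator_of_notMem (by simp [Set.mem_Ioo]; intro _; linarith)]
      simp
  rw [lintegral_congr_ae key]
  rw [lintegral_indicator measurableSet_Ioo _]
  rw [Measure.restrict_restrict measurableSet_Ioo,
    Set.inter_eq_left.mpr (fun t ht => ht.1)]
  rw [lintegral_const_mul' _ _ (by
      exact ne_top_of_le_ne_top (measure_closedBall_lt_top (x := (0:F)) (r := 1)).ne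
        (measure_mono Set.inter_subset_right))]
  rw [gaussK, mul_comm]

lemma integrable_gauss : Integrable (fun x : F => Real.exp (-‖x‖ ^ 2)) volume := by
  have h := (GaussianFourier.integrable_cexp_neg_mul_sq_norm_add
    (V := F) (b := 1) (by norm_num) 0 (0 : F)).norm
  convert h using 2 with x
  simp [Complex.norm_exp]
  norm_cast

lemma gaussK_pos (n : ℕ) : 0 < gaussK n := by
  have hsub : Set.Ioo (0:ℝ) (Real.exp (-1)) ⊆ Set.Ioo (0:ℝ) 1 := by
    apply Set.Ioo_subset_Ioo le_rfl
    exact (Real.exp_lt_one_iff.mpr (by norm_num)).le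
  have h1 : ENNReal.ofReal (Real.exp (-1)) ≤ gaussK n := by
    calc ENNReal.ofReal (Real.exp (-1))
        = ∫⁻ _ in Set.Ioo (0:ℝ) (Real.exp (-1)), 1 ∂volume := by
          rw [setLIntegral_one, Real.volume_Ioo, sub_zero]
      _ ≤ ∫⁻ t in Set.Ioo (0:ℝ) (Real.exp (-1)),
            ENNReal.ofReal (Real.sqrt (-Real.log t) ^ n) ∂volume := by
          apply setLIntegral_mono' measurableSet_Ioo
          intro t ht
          have hlog : 1 ≤ -Real.log t := by
            have := Real.log_lt_log ht.1 ht.2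
            rw [Real.log_exp] at this
            linarith
          have h1 : (1:ℝ) ≤ Real.sqrt (-Real.log t) ^ n :=
            one_le_pow₀ (Real.one_le_sqrt.mpr hlog)
          calc (1 : ENNReal) = ENNReal.ofReal 1 := by simp
            _ ≤ _ := ENNReal.ofReal_le_ofReal h1
      _ ≤ gaussK n := lintegral_mono_set hsub
  calc (0 : ENNReal) < ENNReal.ofReal (Real.exp (-1)) := by
        simp [Real.exp_pos]
    _ ≤ gaussK n := h1

lemma gaussK_ne_top (F : Type*) [NormedAddCommGroup F] [InnerProductSpace ℝ F]
    [FiniteDimensional ℝ F] [MeasurableSpace F] [BorelSpace F] :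
    gaussK (Module.finrank ℝ F) ≠ ⊤ := by
  have hfin : ∫⁻ x : F, ENNReal.ofReal (Real.exp (-‖x‖ ^ 2)) ∂volume < ⊤ :=
    (integrable_gauss (F := F)).lintegral_lt_top
  have heq := lintegral_gauss_cone (F := F) Set.univ MeasurableSet.univ
    (fun c _ x _ => Set.mem_univ _)
  rw [Measure.restrict_univ, Set.univ_inter] at heq
  rw [heq] at hfin
  exact (ENNReal.lt_top_of_mul_ne_top_left hfin.ne
    (measure_closedBall_pos volume (0:F) one_pos).ne').ne

lemma gauss_univ_pos :
    0 < ∫⁻ x : F, ENNReal.ofReal (Real.exp (-‖x‖ ^ 2)) ∂volume := by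
  have heq := lintegral_gauss_cone (F := F) Set.univ MeasurableSet.univ
    (fun c _ x _ => Set.mem_univ _)
  rw [Measure.restrict_univ, Set.univ_inter] at heq
  rw [heq]
  exact ENNReal.mul_pos (gaussK_pos _).ne'
    (measure_closedBall_pos volume (0:F) one_pos).ne'

lemma solid_angle_eq_gauss_ratio (C : Set F) (hCm : MeasurableSet C)
    (hsmul : ∀ (c : ℝ), 0 ≤ c → ∀ x ∈ C, c • x ∈ C) :
    volume (C ∩ Metric.closedBall 0 1) / volume (Metric.closedBall (0:F) 1)
      = (∫⁻ x in C, ENNReal.ofReal (Real.exp (-‖x‖ ^ 2)) ∂volume)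
        / ∫⁻ x : F, ENNReal.ofReal (Real.exp (-‖x‖ ^ 2)) ∂volume := by
  have heqC := lintegral_gauss_cone (F := F) C hCm hsmul
  have heqU := lintegral_gauss_cone (F := F) Set.univ MeasurableSet.univ
    (fun c _ x _ => Set.mem_univ _)
  rw [Measure.restrict_univ, Set.univ_inter] at heqU
  rw [heqC, heqU, ENNReal.mul_div_mul_left _ _ (gaussK_pos _).ne' (gaussK_ne_top F)]

end Space

section Prod
variable {E₁ E₂ : Type*}
  [NormedAddCommGroup E₁] [InnerProductSpace ℝ E₁] [FiniteDimensional ℝ E₁]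
  [MeasurableSpace E₁] [BorelSpace E₁]
  [NormedAddCommGroup E₂] [InnerProductSpace ℝ E₂] [FiniteDimensional ℝ E₂]
  [MeasurableSpace E₂] [BorelSpace E₂]
  [MeasurableSpace (WithLp 2 (E₁ × E₂))] [BorelSpace (WithLp 2 (E₁ × E₂))]

lemma withLp_measurePreserving :
    MeasurePreserving (WithLp.equiv 2 (E₁ × E₂))
      (volume : Measure (WithLp 2 (E₁ × E₂))) (volume : Measure (E₁ × E₂)) := by
  set cle := WithLp.prodContinuousLinearEquiv 2 ℝ E₁ E₂ with hcle
  have hco : ⇑(WithLp.equiv 2 (E₁ × E₂)) = ⇑cle := rfl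
  refine ⟨hco ▸ cle.continuous.measurable, ?_⟩
  set b₁ := stdOrthonormalBasis ℝ E₁
  set b₂ := stdOrthonormalBasis ℝ E₂
  have h1 : (volume : Measure (WithLp 2 (E₁ × E₂))) = (b₁.prod b₂).toBasis.addHaar :=
    ((b₁.prod b₂).addHaar_eq_volume).symm
  have h3 : ((b₁.prod b₂).toBasis).map cle.toLinearEquiv = b₁.toBasis.prod b₂.toBasis := by
    have h2 : (b₁.prod b₂).toBasis
        = (b₁.toBasis.prod b₂.toBasis).map (WithLp.linearEquiv 2 ℝ (E₁ × E₂)).symm :=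
      Module.Basis.toBasis_toOrthonormalBasis _ _
    rw [h2]
    apply Module.Basis.eq_of_apply_eq
    intro i
    simp only [Module.Basis.map_apply]
    rfl
  rw [hco, h1, Module.Basis.map_addHaar _ cle, h3, Module.Basis.prod_addHaar,
    b₁.addHaar_eq_volume, b₂.addHaar_eq_volume, ← Measure.volume_eq_prod]

end Prod

/-- The normalized solid angle of a product of two measurable convex cones, in the
product `E₁ ×₂ E₂` of two finite-dimensional real inner product spaces (with the
product inner product), is the product of the normalized solid angles. -/
theorem solid_angle_prod_cone
    {E₁ E₂ : Type*}
    [NormedAddCommGroup E₁] [InnerProductSpace ℝ E₁] [FiniteDimensional ℝ E₁]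
    [MeasurableSpace E₁] [BorelSpace E₁]
    [NormedAddCommGroup E₂] [InnerProductSpace ℝ E₂] [FiniteDimensional ℝ E₂]
    [MeasurableSpace E₂] [BorelSpace E₂]
    [MeasurableSpace (WithLp 2 (E₁ × E₂))] [BorelSpace (WithLp 2 (E₁ × E₂))]
    (C₁ : Set E₁) (C₂ : Set E₂)
    (hC₁m : MeasurableSet C₁)
    (hC₁add : ∀ x ∈ C₁, ∀ y ∈ C₁, x + y ∈ C₁)
    (hC₁smul : ∀ (c : ℝ), 0 ≤ c → ∀ x ∈ C₁, c • x ∈ C₁)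
    (hC₂m : MeasurableSet C₂)
    (hC₂add : ∀ x ∈ C₂, ∀ y ∈ C₂, x + y ∈ C₂)
    (hC₂smul : ∀ (c : ℝ), 0 ≤ c → ∀ x ∈ C₂, c • x ∈ C₂) :
    volume ({p : WithLp 2 (E₁ × E₂) |
          (WithLp.equiv 2 (E₁ × E₂) p).1 ∈ C₁ ∧ (WithLp.equiv 2 (E₁ × E₂) p).2 ∈ C₂} ∩
        Metric.closedBall 0 1) /
      volume (Metric.closedBall (0 : WithLp 2 (E₁ × E₂)) 1) =
    (volume (C₁ ∩ Metric.closedBall 0 1) / volume (Metric.closedBall (0 : E₁) 1)) *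
      (volume (C₂ ∩ Metric.closedBall 0 1) / volume (Metric.closedBall (0 : E₂) 1)) := by
  classical
  have hmp := withLp_measurePreserving (E₁ := E₁) (E₂ := E₂)
  have hemb : MeasurableEmbedding (WithLp.equiv 2 (E₁ × E₂)) :=
    ((WithLp.prodContinuousLinearEquiv 2 ℝ E₁ E₂).toHomeomorph.toMeasurableEquiv).measurableEmbedding
  set S : Set (WithLp 2 (E₁ × E₂)) := {p : WithLp 2 (E₁ × E₂) |
      (WithLp.equiv 2 (E₁ × E₂) p).1 ∈ C₁ ∧ (WithLp.equiv 2 (E₁ × E₂) p).2 ∈ C₂} with hSdef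
  have hSpre : S = (WithLp.equiv 2 (E₁ × E₂)) ⁻¹' (C₁ ×ˢ C₂) := rfl
  have hSm : MeasurableSet S := by
    rw [hSpre]; exact hmp.measurable (hC₁m.prod hC₂m)
  have hSsmul : ∀ (c : ℝ), 0 ≤ c → ∀ p ∈ S, c • p ∈ S := fun c hc p hp =>
    ⟨hC₁smul c hc _ hp.1, hC₂smul c hc _ hp.2⟩
  -- the Gaussian factors through the equivalence
  have hfun : ∀ p : WithLp 2 (E₁ × E₂),
      ENNReal.ofReal (Real.exp (-‖p‖ ^ 2))
        = (fun z : E₁ × E₂ => ENNReal.ofReal (Real.exp (-‖z.1‖ ^ 2))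
            * ENNReal.ofReal (Real.exp (-‖z.2‖ ^ 2))) (WithLp.equiv 2 (E₁ × E₂) p) := by
    intro p
    simp only
    rw [← ENNReal.ofReal_mul (Real.exp_pos _).le, ← Real.exp_add]
    congr 1
    rw [Real.exp_eq_exp]
    have := WithLp.prod_norm_sq_eq_of_L2 p
    have h1 : ‖(WithLp.equiv 2 (E₁ × E₂) p).1‖ = ‖p.fst‖ := rfl
    have h2 : ‖(WithLp.equiv 2 (E₁ × E₂) p).2‖ = ‖p.snd‖ := rfl
    rw [h1, h2]
    linarith
  have htrans : ∀ s : Set (E₁ × E₂),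
      ∫⁻ p in (WithLp.equiv 2 (E₁ × E₂)) ⁻¹' s,
          ENNReal.ofReal (Real.exp (-‖p‖ ^ 2)) ∂volume
        = ∫⁻ z in s, ENNReal.ofReal (Real.exp (-‖z.1‖ ^ 2))
            * ENNReal.ofReal (Real.exp (-‖z.2‖ ^ 2)) ∂volume := by
    intro s
    rw [show (fun p : WithLp 2 (E₁ × E₂) => ENNReal.ofReal (Real.exp (-‖p‖ ^ 2)))
        = (fun z : E₁ × E₂ => ENNReal.ofReal (Real.exp (-‖z.1‖ ^ 2))
            * ENNReal.ofReal (Real.exp (-‖z.2‖ ^ 2))) ∘ (WithLp.equiv 2 (E₁ × E₂))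
      from funext hfun]
    exact hmp.setLIntegral_comp_preimage_emb hemb (fun z : E₁ × E₂ => ENNReal.ofReal (Real.exp (-‖z.1‖ ^ 2))
      * ENNReal.ofReal (Real.exp (-‖z.2‖ ^ 2))) s
  have hm₁ : Measurable fun x : E₁ => ENNReal.ofReal (Real.exp (-‖x‖ ^ 2)) :=
    ENNReal.measurable_ofReal.comp
      (Real.continuous_exp.comp (continuous_norm.pow 2).neg).measurable
  have hm₂ : Measurable fun x : E₂ => ENNReal.ofReal (Real.exp (-‖x‖ ^ 2)) :=
    ENNReal.measurable_ofReal.comp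
      (Real.continuous_exp.comp (continuous_norm.pow 2).neg).measurable
  have hfact : ∀ (s : Set E₁) (t : Set E₂),
      (∫⁻ z in s ×ˢ t, ENNReal.ofReal (Real.exp (-‖z.1‖ ^ 2))
          * ENNReal.ofReal (Real.exp (-‖z.2‖ ^ 2)) ∂(volume : Measure (E₁ × E₂)))
        = (∫⁻ x in s, ENNReal.ofReal (Real.exp (-‖x‖ ^ 2)) ∂volume)
          * ∫⁻ y in t, ENNReal.ofReal (Real.exp (-‖y‖ ^ 2)) ∂volume := by
    intro s t
    rw [Measure.volume_eq_prod, ← Measure.prod_restrict]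
    exact lintegral_prod_mul hm₁.aemeasurable hm₂.aemeasurable
  -- numerator
  have hnum : ∫⁻ p in S, ENNReal.ofReal (Real.exp (-‖p‖ ^ 2)) ∂volume
      = (∫⁻ x in C₁, ENNReal.ofReal (Real.exp (-‖x‖ ^ 2)) ∂volume)
        * ∫⁻ y in C₂, ENNReal.ofReal (Real.exp (-‖y‖ ^ 2)) ∂volume := by
    rw [hSpre, htrans, hfact]
  have hden : ∫⁻ p : WithLp 2 (E₁ × E₂), ENNReal.ofReal (Real.exp (-‖p‖ ^ 2)) ∂volume
      = (∫⁻ x : E₁, ENNReal.ofReal (Real.exp (-‖x‖ ^ 2)) ∂volume)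
        * ∫⁻ y : E₂, ENNReal.ofReal (Real.exp (-‖y‖ ^ 2)) ∂volume := by
    have h0 : (Set.univ : Set (WithLp 2 (E₁ × E₂)))
        = (WithLp.equiv 2 (E₁ × E₂)) ⁻¹' ((Set.univ : Set E₁) ×ˢ (Set.univ : Set E₂)) := by
      simp
    calc ∫⁻ p : WithLp 2 (E₁ × E₂), ENNReal.ofReal (Real.exp (-‖p‖ ^ 2)) ∂volume
        = ∫⁻ p in (Set.univ : Set (WithLp 2 (E₁ × E₂))),
            ENNReal.ofReal (Real.exp (-‖p‖ ^ 2)) ∂volume := by rw [Measure.restrict_univ]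
      _ = ∫⁻ p in (WithLp.equiv 2 (E₁ × E₂)) ⁻¹' ((Set.univ : Set E₁) ×ˢ (Set.univ : Set E₂)),
            ENNReal.ofReal (Real.exp (-‖p‖ ^ 2)) ∂volume := by rw [← h0]
      _ = _ := by
          rw [htrans, hfact, Measure.restrict_univ, Measure.restrict_univ]
  have hD₁0 : (∫⁻ x : E₁, ENNReal.ofReal (Real.exp (-‖x‖ ^ 2)) ∂volume) ≠ 0 :=
    (gauss_univ_pos (F := E₁)).ne'
  have hD₁t : (∫⁻ x : E₁, ENNReal.ofReal (Real.exp (-‖x‖ ^ 2)) ∂volume) ≠ ⊤ :=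
    (integrable_gauss (F := E₁)).lintegral_lt_top.ne
  have hD₂0 : (∫⁻ x : E₂, ENNReal.ofReal (Real.exp (-‖x‖ ^ 2)) ∂volume) ≠ 0 :=
    (gauss_univ_pos (F := E₂)).ne'
  have hD₂t : (∫⁻ x : E₂, ENNReal.ofReal (Real.exp (-‖x‖ ^ 2)) ∂volume) ≠ ⊤ :=
    (integrable_gauss (F := E₂)).lintegral_lt_top.ne
  rw [solid_angle_eq_gauss_ratio (F := WithLp 2 (E₁ × E₂)) S hSm hSsmul,
    solid_angle_eq_gauss_ratio (F := E₁) C₁ hC₁m hC₁smul,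
    solid_angle_eq_gauss_ratio (F := E₂) C₂ hC₂m hC₂smul,
    hnum, hden]
  rw [div_eq_mul_inv, div_eq_mul_inv, div_eq_mul_inv,
    ENNReal.mul_inv (Or.inl hD₁0) (Or.inl hD₁t)]
  ring
end

section
/- Let E be a finite-dimensional real inner product space and let W be a finite subgroup of the orthogonal group of E that is generated by reflections and has no nonzero fixed vectors (i.e., the subspace of W-invariant vectors of E is zero). Then (1/|W|) · ∑_{w ∈ W} det(1 − w) = 1, where det(1 − w) denotes the determinant of the endomorphism id_E − w of E. -/
open scoped RealInnerProductSpace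

section SolomonAux

variable {E : Type*} [NormedAddCommGroup E] [InnerProductSpace ℝ E]
variable (W : Subgroup (E ≃ₗᵢ[ℝ] E)) [Fintype W]
variable {n : ℕ} (b : Module.Basis (Fin n) ℝ E) (s : Finset (Fin n))

/-- The averaged "minor" form: sum over the group of the determinant form evaluated on a
tuple which is `w (u i)` on `s` and the basis off `s`. -/
noncomputable def solPhi (u : Fin n → E) : ℝ :=
  ∑ w : W, b.det (s.piecewise (fun i => (w : E ≃ₗᵢ[ℝ] E) (u i)) ⇑b)

lemma sol_piecewise_update (g : E → E) (u : Fin n → E) {k : Fin n} (hk : k ∈ s) (x : E) :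
    s.piecewise (fun i => g (Function.update u k x i)) ⇑b
      = Function.update (s.piecewise (fun i => g (u i)) ⇑b) k (g x) := by
  funext i
  rcases eq_or_ne i k with rfl | h
  · simp [Finset.piecewise_eq_of_mem _ _ _ hk]
  · by_cases his : i ∈ s <;>
      simp [Function.update_of_ne h, Finset.piecewise_eq_of_mem, his,
        Finset.piecewise_eq_of_notMem]

lemma solPhi_add (u : Fin n → E) {k : Fin n} (hk : k ∈ s) (x y : E) :
    solPhi W b s (Function.update u k (x + y))
      = solPhi W b s (Function.update u k x) + solPhi W b s (Function.update u k y) := by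
  unfold solPhi
  rw [← Finset.sum_add_distrib]
  refine Finset.sum_congr rfl fun w _ => ?_
  rw [sol_piecewise_update b s _ u hk, sol_piecewise_update b s _ u hk,
    sol_piecewise_update b s _ u hk, map_add, AlternatingMap.map_update_add]

lemma solPhi_smul (u : Fin n → E) {k : Fin n} (hk : k ∈ s) (r : ℝ) (x : E) :
    solPhi W b s (Function.update u k (r • x)) = r * solPhi W b s (Function.update u k x) := by
  unfold solPhi
  rw [Finset.mul_sum]
  refine Finset.sum_congr rfl fun w _ => ?_
  rw [sol_piecewise_update b s _ u hk, sol_piecewise_update b s _ u hk,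
    map_smul, AlternatingMap.map_update_smul, smul_eq_mul]

lemma solPhi_sub (u : Fin n → E) {k : Fin n} (hk : k ∈ s) (x : E) (r : ℝ) (y : E) :
    solPhi W b s (Function.update u k (x - r • y))
      = solPhi W b s (Function.update u k x) - r * solPhi W b s (Function.update u k y) := by
  have h1 : x - r • y = x + (-r) • y := by module
  rw [h1, solPhi_add W b s u hk, solPhi_smul W b s u hk]
  ring

lemma solPhi_two (u : Fin n → E) {k j : Fin n} (hk : k ∈ s) (hj : j ∈ s) (hkj : k ≠ j) (x : E) :
    solPhi W b s (Function.update (Function.update u j x) k x) = 0 := by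
  unfold solPhi
  refine Finset.sum_eq_zero fun w _ => ?_
  rw [sol_piecewise_update b s _ _ hk, sol_piecewise_update b s _ u hj]
  exact AlternatingMap.map_eq_zero_of_eq _ _
    (by simp [Function.update_of_ne hkj.symm]) hkj.symm

lemma solPhi_inv (g : W) (u : Fin n → E) :
    solPhi W b s (fun i => (g : E ≃ₗᵢ[ℝ] E) (u i)) = solPhi W b s u := by
  unfold solPhi
  refine Fintype.sum_equiv (Equiv.mulRight g) _ _ fun w => ?_
  have : (fun i => ((w : E ≃ₗᵢ[ℝ] E)) ((g : E ≃ₗᵢ[ℝ] E) (u i)))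
      = fun i => ((Equiv.mulRight g w : W) : E ≃ₗᵢ[ℝ] E) (u i) := by
    funext i
    simp [Equiv.coe_mulRight, Subgroup.coe_mul, LinearIsometryEquiv.coe_mul]
  rw [this]

lemma solPhi_congr (u u' : Fin n → E) (h : ∀ i ∈ s, u i = u' i) :
    solPhi W b s u = solPhi W b s u' := by
  unfold solPhi
  refine Finset.sum_congr rfl fun w _ => ?_
  congr 1
  funext i
  by_cases his : i ∈ s
  · simp [Finset.piecewise_eq_of_mem _ _ _ his, h i his]
  · simp [Finset.piecewise_eq_of_notMem _ _ _ his]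

lemma solPhi_L {j : Fin n} (hj : j ∈ s) (v : E) (c : Fin n → ℝ) (T : Finset (Fin n))
    (hT : ∀ k ∈ T, k ∈ s ∧ k ≠ j) (u : Fin n → E) :
    solPhi W b s (Function.update (T.piecewise (fun i => u i - c i • v) u) j v)
      = solPhi W b s (Function.update u j v) := by
  classical
  induction T using Finset.induction_on with
  | empty => rw [Finset.piecewise_empty]
  | @insert a T haT ih =>
    obtain ⟨has, haj⟩ := hT a (Finset.mem_insert_self a T)
    have hT' : ∀ k ∈ T, k ∈ s ∧ k ≠ j := fun k hk => hT k (Finset.mem_insert_of_mem hk)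
    rw [Finset.piecewise_insert]
    set P := T.piecewise (fun i => u i - c i • v) u with hP
    rw [Function.update_comm haj]
    rw [solPhi_sub W b s _ has]
    have hPa : Function.update P j v a = u a := by
      rw [Function.update_of_ne haj, hP, Finset.piecewise_eq_of_notMem _ _ _ haT]
    have e1 : Function.update (Function.update P j v) a (u a) = Function.update P j v := by
      rw [← hPa, Function.update_eq_self]
    rw [e1, solPhi_two W b s P has hj haj, ih hT']
    ring

lemma solPhi_vanish [FiniteDimensional ℝ E]
    (hgen : W = Subgroup.closure {w : E ≃ₗᵢ[ℝ] E | w ∈ W ∧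
      ∃ v : E, v ≠ 0 ∧ w v = -v ∧ ∀ u : E, ⟪u, v⟫ = 0 → w u = u})
    (hfix : ∀ v : E, (∀ w ∈ W, w v = v) → v = 0)
    (hs : s.Nonempty) (u : Fin n → E) :
    solPhi W b s u = 0 := by
  classical
  obtain ⟨j, hj⟩ := hs
  -- roots of the generating reflections kill the form when put in slot `j`
  have root : ∀ σ : E ≃ₗᵢ[ℝ] E, σ ∈ W → ∀ v : E, v ≠ 0 → σ v = -v →
      (∀ x : E, ⟪x, v⟫ = 0 → σ x = x) →
      ∀ u : Fin n → E, solPhi W b s (Function.update u j v) = 0 := by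
    intro σ hσ v hv hσv hfixv u
    have hvv : ⟪v, v⟫ ≠ 0 := fun h => hv (inner_self_eq_zero.mp h)
    set c : E → ℝ := fun x => ⟪x, v⟫ / ⟪v, v⟫ with hc
    have hσx : ∀ x : E, σ x = x - (2 * c x) • v := by
      intro x
      have h1 : ⟪x - c x • v, v⟫ = 0 := by
        simp only [hc, inner_sub_left, real_inner_smul_left]
        field_simp
        ring
      have h2 := hfixv _ h1
      have h3 : σ x = (x - c x • v) + c x • σ v := by
        rw [← h2, ← σ.map_smul, ← σ.map_add]
        congr 1
        module
      rw [h3, hσv]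
      module
    set T := s.erase j with hT
    have hTs : ∀ k ∈ T, k ∈ s ∧ k ≠ j :=
      fun k hk => ⟨Finset.mem_of_mem_erase hk, Finset.ne_of_mem_erase hk⟩
    have l1 := solPhi_L W b s hj v (fun i => c (u i)) T hTs u
    have l2 := solPhi_L W b s hj v (fun i => -(c (u i))) T hTs (fun i => σ (u i))
    have e1 : solPhi W b s (fun i => σ (Function.update u j v i))
        = solPhi W b s (Function.update u j v) := solPhi_inv W b s ⟨σ, hσ⟩ _
    have e2 : (fun i => σ (Function.update u j v i))
        = Function.update (fun i => σ (u i)) j (σ v) := by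
      funext i
      rcases eq_or_ne i j with rfl | h
      · simp
      · simp [Function.update_of_ne h]
    have e3 : solPhi W b s (Function.update (fun i => σ (u i)) j (σ v))
        = - solPhi W b s (Function.update (fun i => σ (u i)) j v) := by
      have h4 : σ v = (-1 : ℝ) • v := by rw [hσv]; module
      rw [h4, solPhi_smul W b s _ hj]
      ring
    have congrstep :
        solPhi W b s (Function.update
            (T.piecewise (fun i => σ (u i) - (-(c (u i))) • v) (fun i => σ (u i))) j v)
          = solPhi W b s (Function.update
            (T.piecewise (fun i => u i - c (u i) • v) u) j v) := by
      apply solPhi_congr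
      intro i his
      rcases eq_or_ne i j with rfl | h
      · simp
      · have hiT : i ∈ T := Finset.mem_erase.mpr ⟨h, his⟩
        rw [Function.update_of_ne h, Function.update_of_ne h,
          Finset.piecewise_eq_of_mem _ _ _ hiT, Finset.piecewise_eq_of_mem _ _ _ hiT,
          hσx (u i)]
        module
    have key : solPhi W b s (Function.update u j v)
        = - solPhi W b s (Function.update u j v) := by
      calc solPhi W b s (Function.update u j v)
          = solPhi W b s (Function.update (fun i => σ (u i)) j (σ v)) := by rw [← e1, e2]
        _ = - solPhi W b s (Function.update (fun i => σ (u i)) j v) := e3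
        _ = - solPhi W b s (Function.update
              (T.piecewise (fun i => σ (u i) - (-(c (u i))) • v) (fun i => σ (u i))) j v) := by
            rw [l2]
        _ = - solPhi W b s (Function.update
              (T.piecewise (fun i => u i - c (u i) • v) u) j v) := by rw [congrstep]
        _ = - solPhi W b s (Function.update u j v) := by rw [l1]
    linarith
  -- the kernel submodule
  let Z : Submodule ℝ E :=
    { carrier := {x | ∀ u : Fin n → E, solPhi W b s (Function.update u j x) = 0}
      zero_mem' := by
        intro u
        have h := solPhi_smul W b s u hj 0 0
        simpa using h
      add_mem' := by
        intro x y hx hy u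
        rw [solPhi_add W b s u hj, hx u, hy u]
        ring
      smul_mem' := by
        intro r x hx u
        rw [solPhi_smul W b s u hj, hx u]
        ring }
  have hZperp : ∀ x ∈ Zᗮ, x = 0 := by
    intro x hx
    apply hfix
    intro w hw
    let K : Subgroup (E ≃ₗᵢ[ℝ] E) :=
      { carrier := {g | g x = x}
        one_mem' := by simp
        mul_mem' := by
          intro a g ha hg
          show (a * g) x = x
          rw [LinearIsometryEquiv.coe_mul, Function.comp_apply]
          rw [show g x = x from hg, show a x = x from ha]
        inv_mem' := by
          intro a ha
          show a⁻¹ x = x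
          conv_lhs => rw [← show a x = x from ha]
          rw [LinearIsometryEquiv.coe_inv]
          exact a.symm_apply_apply x }
    have hWK : W ≤ K := by
      conv_lhs => rw [hgen]
      refine (Subgroup.closure_le K).mpr ?_
      intro σ hσ
      obtain ⟨hσW, v, hv0, hσv, hfixv⟩ := hσ
      show σ x = x
      apply hfixv
      have hvZ : v ∈ Z := root σ hσW v hv0 hσv hfixv
      have h := (Submodule.mem_orthogonal Z x).mp hx v hvZ
      rw [real_inner_comm] at h
      exact h
    exact hWK hw
  have hZbot : Zᗮ = ⊥ := by
    rw [Submodule.eq_bot_iff]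
    exact hZperp
  have hZtop : Z = ⊤ := Submodule.orthogonal_eq_bot_iff.mp hZbot
  have huj : u j ∈ Z := hZtop ▸ Submodule.mem_top
  have h0 := huj u
  rwa [Function.update_eq_self] at h0

end SolomonAux

/-- Solomon's formula at `(q,t) = (1,0)`: for a finite reflection group `W` acting on a
finite-dimensional real inner product space `E` with no nonzero fixed vectors,
`(1/|W|) ∑_{w ∈ W} det(1 − w) = 1`. -/
theorem average_det_one_sub_eq_one
    {E : Type*} [NormedAddCommGroup E] [InnerProductSpace ℝ E] [FiniteDimensional ℝ E]
    (W : Subgroup (E ≃ₗᵢ[ℝ] E)) [Fintype W]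
    (hgen : W = Subgroup.closure {w : E ≃ₗᵢ[ℝ] E | w ∈ W ∧
      ∃ v : E, v ≠ 0 ∧ w v = -v ∧ ∀ u : E, ⟪u, v⟫ = 0 → w u = u})
    (hfix : ∀ v : E, (∀ w ∈ W, w v = v) → v = 0) :
    (1 / (Fintype.card W : ℝ)) *
      ∑ w : W, LinearMap.det
        ((LinearMap.id : E →ₗ[ℝ] E) - ((w : E ≃ₗᵢ[ℝ] E).toLinearEquiv : E →ₗ[ℝ] E)) = 1 := by
  set b := Module.finBasis ℝ E with hb
  set n := Module.finrank ℝ E with hn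
  have expand : ∀ w : E ≃ₗᵢ[ℝ] E,
      LinearMap.det ((LinearMap.id : E →ₗ[ℝ] E) - (w.toLinearEquiv : E →ₗ[ℝ] E))
        = ∑ s : Finset (Fin n),
            (-1 : ℝ) ^ s.card * b.det (s.piecewise (fun i => w (b i)) ⇑b) := by
    intro w
    have h0 : LinearMap.det ((LinearMap.id : E →ₗ[ℝ] E) - (w.toLinearEquiv : E →ₗ[ℝ] E))
        = b.det (((LinearMap.id : E →ₗ[ℝ] E) - (w.toLinearEquiv : E →ₗ[ℝ] E)) ∘ ⇑b) := by
      rw [Module.Basis.det_comp, Module.Basis.det_self, mul_one]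
    have h1 : ((LinearMap.id : E →ₗ[ℝ] E) - (w.toLinearEquiv : E →ₗ[ℝ] E)) ∘ ⇑b
        = (fun i => -(w (b i))) + ⇑b := by
      funext i
      simp [sub_eq_neg_add]
    have h2 : b.det ((fun i => -(w (b i))) + ⇑b)
        = ∑ s : Finset (Fin n),
            b.det.toMultilinearMap (s.piecewise (fun i => -(w (b i))) ⇑b) := by
      rw [← b.det.coe_multilinearMap]
      exact b.det.toMultilinearMap.map_add_univ _ _
    rw [h0, h1, h2]
    refine Finset.sum_congr rfl fun s _ => ?_
    have h3 : s.piecewise (fun i => -(w (b i))) ⇑b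
        = s.piecewise (fun i => (-1 : ℝ) • (s.piecewise (fun i => w (b i)) ⇑b) i)
            (s.piecewise (fun i => w (b i)) ⇑b) := by
      funext i
      by_cases his : i ∈ s <;>
        simp [Finset.piecewise_eq_of_mem, his, Finset.piecewise_eq_of_notMem]
    rw [h3, b.det.toMultilinearMap.map_piecewise_smul, Finset.prod_const, smul_eq_mul,
      b.det.coe_multilinearMap]
  have cardpos : (0 : ℝ) < (Fintype.card W : ℝ) := by
    exact_mod_cast Fintype.card_pos
  have main : ∑ w : W, LinearMap.det
        ((LinearMap.id : E →ₗ[ℝ] E) - ((w : E ≃ₗᵢ[ℝ] E).toLinearEquiv : E →ₗ[ℝ] E))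
      = (Fintype.card W : ℝ) := by
    calc ∑ w : W, LinearMap.det
          ((LinearMap.id : E →ₗ[ℝ] E) - ((w : E ≃ₗᵢ[ℝ] E).toLinearEquiv : E →ₗ[ℝ] E))
        = ∑ w : W, ∑ s : Finset (Fin n),
            (-1 : ℝ) ^ s.card * b.det (s.piecewise (fun i => (w : E ≃ₗᵢ[ℝ] E) (b i)) ⇑b) := by
          exact Finset.sum_congr rfl fun w _ => expand w
      _ = ∑ s : Finset (Fin n), (-1 : ℝ) ^ s.card * solPhi W b s ⇑b := by
          rw [Finset.sum_comm]
          refine Finset.sum_congr rfl fun s _ => ?_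
          rw [solPhi, Finset.mul_sum]
      _ = (Fintype.card W : ℝ) := by
          rw [Finset.sum_eq_single (∅ : Finset (Fin n))]
          · rw [solPhi]
            simp [Finset.piecewise_empty, Module.Basis.det_self]
          · intro s _ hs
            rw [solPhi_vanish W b s hgen hfix (Finset.nonempty_iff_ne_empty.mpr hs), mul_zero]
          · intro h
            exact absurd (Finset.mem_univ _) h
  rw [main]
  field_simp
end

section
/- For every integer n ≥ 2, 2 · (C(2n, n)/4^n) + ∑_{h=2}^{n} ((h−1)/(4^{h−1} h)) · C(2(h−1), h−1) · (C(2(n−h), n−h)/4^{n−h}) = 1, as an identity of rational numbers. -/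
open Finset

/-- `c k = C(2k,k)/4^k`, i.e. `ν(B_k)`. -/
noncomputable def nuB (k : ℕ) : ℚ := (Nat.centralBinom k : ℚ) / 4 ^ k

lemma nuB_zero : nuB 0 = 1 := by simp [nuB, Nat.centralBinom]

lemma nuB_one : nuB 1 = 1 / 2 := by
  simp [nuB, Nat.centralBinom]
  norm_num [Nat.choose]

/-- Recurrence: `2(k+1) c(k+1) = (2k+1) c k`. -/
lemma nuB_rec (k : ℕ) : 2 * ((k : ℚ) + 1) * nuB (k + 1) = (2 * k + 1) * nuB k := by
  have h := Nat.succ_mul_centralBinom_succ k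
  have key : ((k : ℚ) + 1) * (Nat.centralBinom (k + 1) : ℚ) =
      2 * (2 * (k : ℚ) + 1) * (Nat.centralBinom k : ℚ) := by exact_mod_cast h
  have h4 : (4 : ℚ) ^ k ≠ 0 := by positivity
  unfold nuB
  rw [pow_succ]
  field_simp
  linear_combination 2 * key

/-- Convolution identity: `∑_{k=0}^n c_k c_{n-k} = 1`. -/
lemma nuB_conv (n : ℕ) : ∑ k ∈ range (n + 1), nuB k * nuB (n - k) = 1 := by
  induction n with
  | zero => simp [nuB_zero]
  | succ n ih =>
    have Wsym : ∀ m : ℕ, (2 : ℚ) * ∑ k ∈ range (m + 1), (k : ℚ) * nuB k * nuB (m - k)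
        = (m : ℚ) * ∑ k ∈ range (m + 1), nuB k * nuB (m - k) := by
      intro m
      have hrefl : ∑ k ∈ range (m + 1), (k : ℚ) * nuB k * nuB (m - k)
          = ∑ k ∈ range (m + 1), ((m - k : ℕ) : ℚ) * nuB (m - k) * nuB k := by
        rw [← Finset.sum_range_reflect]
        refine Finset.sum_congr rfl fun k hk => ?_
        have hk' : k ≤ m := Nat.lt_succ_iff.mp (mem_range.mp hk)
        have h1 : m + 1 - 1 - k = m - k := by omega
        rw [h1, Nat.sub_sub_self hk']
      rw [two_mul]
      nth_rewrite 2 [hrefl]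
      rw [← Finset.sum_add_distrib, Finset.mul_sum]
      refine Finset.sum_congr rfl fun k hk => ?_
      have hk' : k ≤ m := Nat.lt_succ_iff.mp (mem_range.mp hk)
      have hc : ((m - k : ℕ) : ℚ) = (m : ℚ) - k := Nat.cast_sub hk'
      rw [hc]; ring
    have Wstep : ∑ k ∈ range (n + 2), (k : ℚ) * nuB k * nuB (n + 1 - k)
        = ∑ k ∈ range (n + 1), (k : ℚ) * nuB k * nuB (n - k)
          + (1 / 2) * ∑ k ∈ range (n + 1), nuB k * nuB (n - k) := by
      rw [Finset.sum_range_succ' (fun k => (k : ℚ) * nuB k * nuB (n + 1 - k)) (n + 1)]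
      simp only [Nat.cast_zero, zero_mul, add_zero]
      rw [Finset.mul_sum, ← Finset.sum_add_distrib]
      refine Finset.sum_congr rfl fun k hk => ?_
      have hsub : n + 1 - (k + 1) = n - k := by omega
      rw [hsub]
      have hrec := nuB_rec k
      push_cast
      linear_combination (nuB (n - k) / 2) * hrec
    have h1 := Wsym n
    have h2 := Wsym (n + 1)
    rw [ih] at h1
    rw [Wstep] at h2
    push_cast at h2
    nlinarith [h1, h2]

/-- `ν(D_{m+1}) = 2 c_{m+1} - c_m`. -/
lemma nuD_eq (m : ℕ) :
    ((m : ℚ)) / (4 ^ m * ((m : ℚ) + 1)) * (Nat.choose (2 * m) m : ℚ)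
      = 2 * nuB (m + 1) - nuB m := by
  have hrec := nuB_rec m
  have hne : ((m : ℚ) + 1) ≠ 0 := by positivity
  have h4 : (4 : ℚ) ^ m ≠ 0 := by positivity
  have hcb : (Nat.centralBinom m : ℚ) = (Nat.choose (2 * m) m : ℚ) := by
    rw [Nat.centralBinom]
  have hm : nuB m = (Nat.choose (2 * m) m : ℚ) / 4 ^ m := by rw [nuB, hcb]
  have h2 : nuB (m + 1) = (2 * m + 1) / (2 * ((m : ℚ) + 1)) * nuB m := by
    field_simp
    linarith [hrec]
  rw [h2, hm]
  field_simp
  ring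

/-- Type `Bₙ` case of the main identity: `2ν(Bₙ) + ∑_{h=2}^{n} ν(D_h) ν(B_{n−h}) = 1`. -/
theorem sum_nu_B_eq_one (n : ℕ) (hn : 2 ≤ n) :
    2 * ((Nat.choose (2 * n) n : ℚ) / 4 ^ n) +
      ∑ h ∈ Finset.Icc 2 n,
        (((h : ℚ) - 1) / (4 ^ (h - 1) * (h : ℚ))) * (Nat.choose (2 * (h - 1)) (h - 1) : ℚ) *
          ((Nat.choose (2 * (n - h)) (n - h) : ℚ) / 4 ^ (n - h)) = 1 := by
  obtain ⟨m, rfl⟩ : ∃ m, n = m + 2 := ⟨n - 2, by omega⟩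
  have hcb : ∀ k : ℕ, (Nat.choose (2 * k) k : ℚ) / 4 ^ k = nuB k := by
    intro k; rw [nuB, Nat.centralBinom]
  have hIcc : Finset.Icc 2 (m + 2) = Finset.Ico 2 (m + 3) := by
    rw [← Finset.Ico_add_one_right_eq_Icc]; rfl
  rw [hIcc, Finset.sum_Ico_eq_sum_range]
  have hlen : m + 3 - 2 = m + 1 := by omega
  rw [hlen]
  have hterm : ∀ i ∈ range (m + 1),
      (((2 + i : ℕ) : ℚ) - 1) / (4 ^ (2 + i - 1) * ((2 + i : ℕ) : ℚ)) *
          (Nat.choose (2 * (2 + i - 1)) (2 + i - 1) : ℚ) *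
          ((Nat.choose (2 * (m + 2 - (2 + i))) (m + 2 - (2 + i)) : ℚ) / 4 ^ (m + 2 - (2 + i)))
        = (2 * nuB (i + 2) - nuB (i + 1)) * nuB (m - i) := by
    intro i hi
    have h1 : 2 + i - 1 = i + 1 := by omega
    have h2 : m + 2 - (2 + i) = m - i := by omega
    rw [h1, h2, hcb]
    have key := nuD_eq (i + 1)
    have e3 : i + 1 + 1 = i + 2 := rfl
    rw [e3] at key
    push_cast at key ⊢
    linear_combination nuB (m - i) * key
  rw [Finset.sum_congr rfl hterm, hcb]
  have T2 := nuB_conv (m + 2)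
  have T1 := nuB_conv (m + 1)
  rw [Finset.sum_range_succ' _ (m + 2), Finset.sum_range_succ' _ (m + 1)] at T2
  rw [Finset.sum_range_succ' _ (m + 1)] at T1
  norm_num [nuB_zero, nuB_one] at T2 T1
  have e2 : ∀ i, m + 2 - (i + 1 + 1) = m - i := fun i => by omega
  have e1 : ∀ i, m + 1 - (i + 1) = m - i := fun i => by omega
  simp only [e2, e1] at T2 T1
  have expand : ∑ i ∈ range (m + 1), (2 * nuB (i + 2) - nuB (i + 1)) * nuB (m - i)
      = 2 * ∑ i ∈ range (m + 1), nuB (i + 1 + 1) * nuB (m - i)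
        - ∑ i ∈ range (m + 1), nuB (i + 1) * nuB (m - i) := by
    rw [Finset.mul_sum, ← Finset.sum_sub_distrib]
    refine Finset.sum_congr rfl fun i _ => ?_
    ring
  rw [expand]
  linarith [T2, T1]
end

section
/- For every integer n ≥ 4, 4 · ((n−1)/(4^{n−1} n)) · C(2(n−1), n−1) + ∑_{h=2}^{n−2} ((h−1)/(4^{h−1} h)) · C(2(h−1), h−1) · ((n−h−1)/(4^{n−h−1}(n−h))) · C(2(n−h−1), n−h−1) = 1, as an identity of rational numbers. -/
open Finset

namespace NuD

/-- normalized central binomial `C(2k,k)/4^k` -/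
def bq (k : ℕ) : ℚ := (Nat.centralBinom k : ℚ) / 4 ^ k
/-- normalized Catalan `catalan k / 4^k` -/
def cq (k : ℕ) : ℚ := (catalan k : ℚ) / 4 ^ k

lemma bq_zero : bq 0 = 1 := by simp [bq, Nat.centralBinom]
lemma cq_zero : cq 0 = 1 := by simp [cq]

lemma succ_cq (k : ℕ) : ((k : ℚ) + 1) * cq k = bq k := by
  have h : ((k + 1) * catalan k : ℚ) = (Nat.centralBinom k : ℚ) := by
    exact_mod_cast congrArg (Nat.cast (R := ℚ)) (succ_mul_catalan_eq_centralBinom k)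
  rw [bq, cq, ← h]
  ring

lemma bq_succ (k : ℕ) : (2 * (k:ℚ) + 1) * bq k = 2 * ((k:ℚ) + 1) * bq (k+1) := by
  have h' : ((k:ℚ)+1) * (Nat.centralBinom (k+1) : ℚ)
      = 2 * (2*(k:ℚ)+1) * (Nat.centralBinom k : ℚ) := by
    exact_mod_cast congrArg (Nat.cast (R := ℚ)) (Nat.succ_mul_centralBinom_succ k)
  have h4 : (0:ℚ) < 4 ^ k := by positivity
  rw [bq, bq, pow_succ]
  field_simp
  linear_combination (-2:ℚ) * h'


lemma half_sum (m : ℕ) (w : ℕ → ℚ) (c : ℚ) (hw : ∀ k, k ≤ m → w k + w (m-k) = c) :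
    2 * ∑ k ∈ range (m+1), w k * (bq k * bq (m-k))
      = c * ∑ k ∈ range (m+1), bq k * bq (m-k) := by
  have hrefl := Finset.sum_range_reflect (fun k => w k * (bq k * bq (m-k))) (m+1)
  rw [two_mul, Finset.mul_sum]
  nth_rewrite 1 [← hrefl]
  rw [← Finset.sum_add_distrib]
  refine Finset.sum_congr rfl fun k hk => ?_
  have hk' : k ≤ m := Nat.lt_succ_iff.mp (mem_range.mp hk)
  have h1 : m + 1 - 1 - k = m - k := by omega
  have h2 : m - (m - k) = k := by omega
  simp only [h1, h2]
  linear_combination (bq k * bq (m-k)) * hw k hk'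

lemma S_eq_one : ∀ m : ℕ, ∑ k ∈ range (m+1), bq k * bq (m-k) = 1 := by
  intro m
  induction m with
  | zero => simp [bq_zero]
  | succ n ih =>
    -- A := weighted sum with weight 2k+1
    have key1 : 2 * ∑ k ∈ range (n+1), (2*(k:ℚ)+1) * (bq k * bq (n-k))
        = (2*(n:ℚ)+2) * ∑ k ∈ range (n+1), bq k * bq (n-k) := by
      refine half_sum n _ _ fun k hk => ?_
      rw [Nat.cast_sub hk]; ring
    have key3 : 2 * ∑ j ∈ range (n+2), (j:ℚ) * (bq j * bq (n+1-j))
        = ((n:ℚ)+1) * ∑ j ∈ range (n+2), bq j * bq (n+1-j) := by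
      refine half_sum (n+1) _ _ fun k hk => ?_
      rw [Nat.cast_sub hk]; push_cast; ring
    have key2 : ∑ k ∈ range (n+1), (2*(k:ℚ)+1) * (bq k * bq (n-k))
        = 2 * ∑ j ∈ range (n+2), (j:ℚ) * (bq j * bq (n+1-j)) := by
      rw [Finset.sum_range_succ' (fun j => (j:ℚ) * (bq j * bq (n+1-j))) (n+1)]
      simp only [Nat.cast_zero, zero_mul, add_zero, Nat.cast_add, Nat.cast_one,
        Nat.succ_sub_succ_eq_sub]
      rw [Finset.mul_sum]
      refine Finset.sum_congr rfl fun k hk => ?_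
      linear_combination bq (n-k) * bq_succ k
    rw [ih] at key1
    rw [key2] at key1
    rw [key3] at key1
    have hne : ((n:ℚ)+1) ≠ 0 := by positivity
    have h' : ((n:ℚ)+1) * (∑ j ∈ range (n+2), bq j * bq (n+1-j)) = ((n:ℚ)+1) * 1 := by
      linarith [key1]
    exact mul_left_cancel₀ hne h'


lemma cq_succ (k : ℕ) : (2*(k:ℚ)+1) * cq k = 2*((k:ℚ)+2) * cq (k+1) := by
  have hne : ((k:ℚ)+1) ≠ 0 := by positivity
  apply mul_left_cancel₀ hne
  have h2 := succ_cq (k+1)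
  push_cast at h2
  linear_combination (2*(k:ℚ)+1) * succ_cq k + bq_succ k - 2*((k:ℚ)+1) * h2

lemma cq_conv (m : ℕ) : ∑ k ∈ range (m+1), cq k * cq (m-k) = 4 * cq (m+1) := by
  have h : (catalan (m+1) : ℚ) = ∑ k ∈ range (m+1), (catalan k : ℚ) * (catalan (m-k) : ℚ) := by
    rw [catalan_succ, Fin.sum_univ_eq_sum_range (fun i => catalan i * catalan (m-i)) (m+1)]
    push_cast
    ring
  calc ∑ k ∈ range (m+1), cq k * cq (m-k)
      = ∑ k ∈ range (m+1), (catalan k : ℚ) * (catalan (m-k) : ℚ) / 4^m := by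
        refine Finset.sum_congr rfl fun k hk => ?_
        have hk' : k ≤ m := Nat.lt_succ_iff.mp (mem_range.mp hk)
        rw [cq, cq, div_mul_div_comm, ← pow_add, Nat.add_sub_cancel' hk']
    _ = (catalan (m+1) : ℚ) / 4^m := by rw [← Finset.sum_div, ← h]
    _ = 4 * cq (m+1) := by rw [cq, pow_succ]; ring

lemma T_eq : ∀ m : ℕ, ∑ k ∈ range (m+1), cq k * bq (m-k) = 2 * bq (m+1) := by
  intro m
  induction m with
  | zero =>
    have h1 : Nat.centralBinom 1 = 2 := by decide
    simp [cq_zero, bq_zero, bq, h1]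
    norm_num
  | succ n ih =>
    set X := ∑ k ∈ range (n+2), cq k * bq (n+1-k) with hX
    have F1 : ∑ j ∈ range (n+2), ((j:ℚ)+1) * (cq j * bq (n+1-j)) = 1 := by
      have e : ∑ j ∈ range (n+2), ((j:ℚ)+1) * (cq j * bq (n+1-j))
          = ∑ j ∈ range (n+2), bq j * bq (n+1-j) :=
        Finset.sum_congr rfl fun j hj => by linear_combination bq (n+1-j) * succ_cq j
      rw [e, S_eq_one (n+1)]
    have F2 : ∑ k ∈ range (n+2), (((n:ℚ)+1)-(k:ℚ)) * (cq k * bq (n+1-k))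
        = ((n:ℚ)+2) * X - 1 := by
      calc ∑ k ∈ range (n+2), (((n:ℚ)+1)-(k:ℚ)) * (cq k * bq (n+1-k))
          = ∑ k ∈ range (n+2), (((n:ℚ)+2) * (cq k * bq (n+1-k))
              - ((k:ℚ)+1) * (cq k * bq (n+1-k))) :=
            Finset.sum_congr rfl fun k _ => by ring
        _ = ((n:ℚ)+2) * (∑ k ∈ range (n+2), cq k * bq (n+1-k))
              - ∑ k ∈ range (n+2), ((k:ℚ)+1) * (cq k * bq (n+1-k)) := by
            rw [Finset.sum_sub_distrib, ← Finset.mul_sum]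
        _ = ((n:ℚ)+2) * X - 1 := by rw [F1, ← hX]
    have h0 : ∑ i ∈ range (n+1), (((i:ℚ)+1)+1) * (cq (i+1) * bq (n-i)) = 1 - bq (n+1) := by
      have hshift := Finset.sum_range_succ' (fun j => ((j:ℚ)+1) * (cq j * bq (n+1-j))) (n+1)
      rw [F1] at hshift
      simp only [Nat.succ_sub_succ_eq_sub, Nat.cast_add, Nat.cast_one, Nat.cast_zero,
        cq_zero, one_mul, zero_add, Nat.sub_zero] at hshift
      linarith [hshift]
    have F3 : ∑ k ∈ range (n+1), (2*(k:ℚ)+1) * (cq k * bq (n-k)) = 2 * (1 - bq (n+1)) := by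
      calc ∑ k ∈ range (n+1), (2*(k:ℚ)+1) * (cq k * bq (n-k))
          = ∑ k ∈ range (n+1), 2 * ((((k:ℚ)+1)+1) * (cq (k+1) * bq (n-k))) :=
            Finset.sum_congr rfl fun k _ => by linear_combination bq (n-k) * cq_succ k
        _ = 2 * (1 - bq (n+1)) := by rw [← Finset.mul_sum, h0]
    have F4 : ∑ k ∈ range (n+1), (2*((n:ℚ)-(k:ℚ))+1) * (cq k * bq (n-k))
        = 2*(((n:ℚ)+2) * X - 1) := by
      have step : ∀ k ∈ range (n+1), (2*((n:ℚ)-(k:ℚ))+1) * (cq k * bq (n-k))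
          = 2 * ((((n:ℚ)+1)-(k:ℚ)) * (cq k * bq (n+1-k))) := by
        intro k hk
        have hk' : k ≤ n := Nat.lt_succ_iff.mp (mem_range.mp hk)
        have hb := bq_succ (n-k)
        rw [Nat.cast_sub hk'] at hb
        have h2 : n - k + 1 = n + 1 - k := by omega
        rw [h2] at hb
        linear_combination cq k * hb
      rw [Finset.sum_congr rfl step, ← Finset.mul_sum, ← F2,
        Finset.sum_range_succ (fun k => (((n:ℚ)+1)-(k:ℚ)) * (cq k * bq (n+1-k))) (n+1)]
      push_cast
      ring
    have F5 : (∑ k ∈ range (n+1), (2*(k:ℚ)+1) * (cq k * bq (n-k)))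
        + ∑ k ∈ range (n+1), (2*((n:ℚ)-(k:ℚ))+1) * (cq k * bq (n-k))
        = (2*(n:ℚ)+2) * (2 * bq (n+1)) := by
      rw [← Finset.sum_add_distrib, ← ih, Finset.mul_sum]
      exact Finset.sum_congr rfl fun k _ => by ring
    have hb := bq_succ (n+1)
    push_cast at hb
    have hne : ((n:ℚ)+2) ≠ 0 := by positivity
    show X = 2 * bq (n+2)
    apply mul_left_cancel₀ hne
    nlinarith [F3, F4, F5, hb]


lemma main (m : ℕ) :
    4 * ((((m:ℚ)+1)/((m:ℚ)+2)) * bq (m+1))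
      + ∑ j ∈ range (m+1),
          ((j:ℚ) * ((m:ℚ)-(j:ℚ)) / (((j:ℚ)+1) * ((m:ℚ)-(j:ℚ)+1))) * (bq j * bq (m-j)) = 1 := by
  have Hterm : ∀ j ∈ range (m+1),
      ((j:ℚ) * ((m:ℚ)-(j:ℚ)) / (((j:ℚ)+1) * ((m:ℚ)-(j:ℚ)+1))) * (bq j * bq (m-j))
        = bq j * bq (m-j) - cq j * bq (m-j) - bq j * cq (m-j) + cq j * cq (m-j) := by
    intro j hj
    have hj' : j ≤ m := Nat.lt_succ_iff.mp (mem_range.mp hj)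
    have hc : ((m-j : ℕ) : ℚ) = (m:ℚ) - (j:ℚ) := Nat.cast_sub hj'
    have h1 : ((j:ℚ)+1) * cq j = bq j := succ_cq j
    have h2 : (((m:ℚ)-(j:ℚ))+1) * cq (m-j) = bq (m-j) := by
      rw [← hc]; exact succ_cq (m-j)
    have ha : ((j:ℚ)+1) ≠ 0 := by positivity
    have hb : ((m:ℚ)-(j:ℚ))+1 ≠ 0 := by rw [← hc]; positivity
    rw [← h1, ← h2]
    field_simp
    ring
  rw [Finset.sum_congr rfl Hterm]
  have hsplit : ∑ j ∈ range (m+1),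
      (bq j * bq (m-j) - cq j * bq (m-j) - bq j * cq (m-j) + cq j * cq (m-j))
      = (∑ j ∈ range (m+1), bq j * bq (m-j)) - (∑ j ∈ range (m+1), cq j * bq (m-j))
        - (∑ j ∈ range (m+1), bq j * cq (m-j)) + ∑ j ∈ range (m+1), cq j * cq (m-j) := by
    rw [Finset.sum_add_distrib, Finset.sum_sub_distrib, Finset.sum_sub_distrib]
  have hT' : ∑ j ∈ range (m+1), bq j * cq (m-j) = ∑ j ∈ range (m+1), cq j * bq (m-j) := by
    rw [← Finset.sum_range_reflect (fun j => bq j * cq (m-j)) (m+1)]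
    refine Finset.sum_congr rfl fun j hj => ?_
    have hj' : j ≤ m := Nat.lt_succ_iff.mp (mem_range.mp hj)
    have e1 : m + 1 - 1 - j = m - j := by omega
    have e2 : m - (m - j) = j := by omega
    simp only [e1, e2]
    ring
  rw [hsplit, hT', S_eq_one m, T_eq m, cq_conv m]
  have hs := succ_cq (m+1)
  push_cast at hs
  have hne : ((m:ℚ)+2) ≠ 0 := by positivity
  field_simp
  linear_combination 4 * hs


lemma choose_eq (k : ℕ) : (Nat.choose (2*k) k : ℚ) = bq k * 4^k := by
  have h4 : ((4:ℚ))^k ≠ 0 := by positivity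
  rw [bq, ← Nat.centralBinom_eq_two_mul_choose, div_mul_cancel₀ _ h4]

end NuD

/-- Type `Dₙ` case of the main identity: `4ν(Dₙ) + ∑_{h=2}^{n−2} ν(D_h) ν(D_{n−h}) = 1`. -/
theorem sum_nu_D_eq_one (n : ℕ) (hn : 4 ≤ n) :
    4 * ((((n : ℚ) - 1) / (4 ^ (n - 1) * (n : ℚ))) * (Nat.choose (2 * (n - 1)) (n - 1) : ℚ)) +
      ∑ h ∈ Finset.Icc 2 (n - 2),
        ((((h : ℚ) - 1) / (4 ^ (h - 1) * (h : ℚ))) * (Nat.choose (2 * (h - 1)) (h - 1) : ℚ)) *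
          ((((n : ℚ) - (h : ℚ) - 1) / (4 ^ (n - h - 1) * ((n : ℚ) - (h : ℚ)))) *
            (Nat.choose (2 * (n - h - 1)) (n - h - 1) : ℚ)) = 1 := by
  open Finset NuD in
  obtain ⟨m, rfl⟩ : ∃ m, n = m + 2 := ⟨n - 2, by omega⟩
  have hm : 2 ≤ m := by omega
  have h1 : m + 2 - 1 = m + 1 := by omega
  have h2 : m + 2 - 2 = m := by omega
  rw [h1, h2]
  have hhead : ((((m+2:ℕ):ℚ)) - 1) / (4 ^ (m+1) * ((m+2:ℕ):ℚ)) * (Nat.choose (2*(m+1)) (m+1) : ℚ)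
      = (((m:ℚ)+1)/((m:ℚ)+2)) * bq (m+1) := by
    rw [choose_eq (m+1)]
    have h4 : ((4:ℚ))^(m+1) ≠ 0 := by positivity
    have hne : ((m:ℚ)+2) ≠ 0 := by positivity
    push_cast
    field_simp
    ring
  have hsum : (∑ h ∈ Icc 2 m,
        ((((h : ℚ) - 1) / (4 ^ (h - 1) * (h : ℚ))) * (Nat.choose (2 * (h - 1)) (h - 1) : ℚ)) *
          (((((m+2:ℕ):ℚ)) - (h : ℚ) - 1) / (4 ^ (m + 2 - h - 1) * (((m+2:ℕ):ℚ) - (h : ℚ))) *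
            (Nat.choose (2 * (m + 2 - h - 1)) (m + 2 - h - 1) : ℚ)))
      = ∑ j ∈ range (m+1),
          ((j:ℚ) * ((m:ℚ)-(j:ℚ)) / (((j:ℚ)+1) * ((m:ℚ)-(j:ℚ)+1))) * (bq j * bq (m-j)) := by
    rw [Finset.sum_subset (fun h hh => mem_range.mpr (by rw [mem_Icc] at hh; omega) :
        Icc 2 m ⊆ range (m+2)) ?van]
    case van =>
      intro h hr hni
      rw [mem_range] at hr
      rw [mem_Icc] at hni
      have hcase : h = 0 ∨ h = 1 ∨ h = m + 1 := by omega
      rcases hcase with rfl | rfl | rfl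
      · norm_num
      · norm_num
      · have hz : ((m+2:ℕ):ℚ) - ((m+1:ℕ):ℚ) - 1 = 0 := by push_cast; ring
        rw [hz, zero_div, zero_mul, mul_zero]
    rw [Finset.sum_range_succ']
    have hz0 : ((((0:ℕ) : ℚ) - 1) / (4 ^ (0 - 1) * ((0:ℕ) : ℚ)) *
        (Nat.choose (2 * (0 - 1)) (0 - 1) : ℚ)) *
        (((((m+2:ℕ):ℚ)) - ((0:ℕ) : ℚ) - 1) / (4 ^ (m + 2 - 0 - 1) * (((m+2:ℕ):ℚ) - ((0:ℕ) : ℚ))) *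
          (Nat.choose (2 * (m + 2 - 0 - 1)) (m + 2 - 0 - 1) : ℚ)) = 0 := by norm_num
    rw [hz0, add_zero]
    refine Finset.sum_congr rfl fun j hj => ?_
    have hj' : j ≤ m := Nat.lt_succ_iff.mp (mem_range.mp hj)
    have e1 : j + 1 - 1 = j := by omega
    have e2 : m + 2 - (j + 1) - 1 = m - j := by omega
    rw [e1, e2]
    have hc : ((m - j : ℕ) : ℚ) = (m:ℚ) - (j:ℚ) := Nat.cast_sub hj'
    have h4j : ((4:ℚ))^j ≠ 0 := by positivity
    have h4l : ((4:ℚ))^(m-j) ≠ 0 := by positivity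
    have hja : ((j:ℚ)+1) ≠ 0 := by positivity
    have hlb : ((m:ℚ)-(j:ℚ))+1 ≠ 0 := by rw [← hc]; positivity
    have fact1 : (((j+1:ℕ):ℚ) - 1) / (4 ^ j * ((j+1:ℕ):ℚ)) * (Nat.choose (2*j) j : ℚ)
        = ((j:ℚ)/((j:ℚ)+1)) * bq j := by
      rw [choose_eq j]
      push_cast
      field_simp
      ring
    have fact2 : (((m+2:ℕ):ℚ) - ((j+1:ℕ):ℚ) - 1) /
          (4 ^ (m-j) * (((m+2:ℕ):ℚ) - ((j+1:ℕ):ℚ))) * (Nat.choose (2*(m-j)) (m-j) : ℚ)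
        = (((m:ℚ)-(j:ℚ))/(((m:ℚ)-(j:ℚ))+1)) * bq (m-j) := by
      rw [choose_eq (m-j)]
      have en : ((m+2:ℕ):ℚ) - ((j+1:ℕ):ℚ) - 1 = (m:ℚ) - (j:ℚ) := by push_cast; ring
      have ed : ((m+2:ℕ):ℚ) - ((j+1:ℕ):ℚ) = ((m:ℚ)-(j:ℚ)) + 1 := by push_cast; ring
      rw [en, ed]
      field_simp
    rw [fact1, fact2, ← div_mul_div_comm]
    ring
  rw [hsum, hhead]
  exact NuD.main m
end
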